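/- arXiv:1706.07270 — 6 statements merged into one kernel-verified Lean document; each statement's English description precedes it below -/
import Mathlib

section
/- (Stability.) Let R, R̃ ∈ ℝ^{d×(k+1)} and λ > 0. Let c^λ and c̃^λ be the regularized extrapolation coefficients computed from R and R̃ respectively, and let P = RᵀR − R̃ᵀR̃. Then ‖c̃^λ − c^λ‖ ≤ (‖P‖/λ)·‖c^λ‖. -/
open Matrix

/-- Operator 2-norm of a real matrix (norm of the induced map between Euclidean spaces). -/
noncomputable def opNorm {n m : ℕ} (M : Matrix (Fin n) (Fin m) ℝ) : ℝ :=
  ‖(Matrix.toEuclideanLin M).toContinuousLinearMap‖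

/-- `c` is the vector of regularized extrapolation coefficients for the matrix `M`
and regularization parameter `lam`: it minimizes `‖M c‖² + lam ‖c‖²` over `{c : 𝟙ᵀc = 1}`. -/
def IsRNACoeff {d k : ℕ} (M : Matrix (Fin d) (Fin (k+1)) ℝ) (lam : ℝ)
    (c : EuclideanSpace ℝ (Fin (k+1))) : Prop :=
  (∑ i, c i) = 1 ∧ ∀ c' : EuclideanSpace ℝ (Fin (k+1)), (∑ i, c' i) = 1 →
    ‖Matrix.toEuclideanLin M c‖ ^ 2 + lam * ‖c‖ ^ 2 ≤
      ‖Matrix.toEuclideanLin M c'‖ ^ 2 + lam * ‖c'‖ ^ 2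

-- quadratic nonneg forces linear coefficient zero
lemma lin_coeff_zero (a b : ℝ) (ha : 0 ≤ a) (h : ∀ t : ℝ, 0 ≤ a * t ^ 2 + b * t) : b = 0 := by
  have h1 := h (-b / (a + 1))
  have hpos : (0:ℝ) < a + 1 := by linarith
  have : a * (-b / (a+1))^2 + b * (-b/(a+1)) = -(b^2) * (1/(a+1)^2) := by
    field_simp; ring
  rw [this] at h1
  have h2 : (0:ℝ) ≤ -b^2 := by
    calc (0:ℝ) ≤ (-(b^2) * (1/(a+1)^2)) * (a+1)^2 := mul_nonneg h1 (sq_nonneg _)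
    _ = -b^2 := by field_simp
  have h3 : b^2 = 0 := le_antisymm (by linarith) (sq_nonneg b)
  exact pow_eq_zero_iff two_ne_zero |>.mp h3

lemma key {d k : ℕ} (M : Matrix (Fin d) (Fin (k+1)) ℝ) (lam : ℝ) (hlam : 0 ≤ lam)
    (c c' : EuclideanSpace ℝ (Fin (k+1)))
    (hc : IsRNACoeff M lam c) (h' : (∑ i, c' i) = 1) :
    ‖Matrix.toEuclideanLin M c'‖ ^ 2 + lam * ‖c'‖ ^ 2 =
      ‖Matrix.toEuclideanLin M c‖ ^ 2 + lam * ‖c‖ ^ 2 +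
        (‖Matrix.toEuclideanLin M (c' - c)‖ ^ 2 + lam * ‖c' - c‖ ^ 2) := by
  set A := Matrix.toEuclideanLin M
  set δ := c' - c with hδ
  have hsumδ : (∑ i, δ i) = 0 := by
    have : ∀ i, δ i = c' i - c i := fun i => rfl
    simp [this, Finset.sum_sub_distrib, h', hc.1]
  set a : ℝ := ‖A δ‖^2 + lam * ‖δ‖^2 with hA
  set b : ℝ := 2 * (inner ℝ (A c) (A δ) + lam * (inner ℝ c δ : ℝ)) with hb
  have expand : ∀ t : ℝ, ‖A (c + t • δ)‖^2 + lam * ‖c + t • δ‖^2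
      = (‖A c‖^2 + lam * ‖c‖^2) + b * t + a * t^2 := by
    intro t
    have e1 : A (c + t • δ) = A c + t • A δ := by rw [map_add, LinearMap.map_smul]
    rw [e1, norm_add_sq_real, norm_add_sq_real]
    rw [real_inner_smul_right, real_inner_smul_right, norm_smul, norm_smul]
    simp only [Real.norm_eq_abs, mul_pow, sq_abs]
    ring
  have hnn : ∀ t : ℝ, 0 ≤ a * t ^ 2 + b * t := by
    intro t
    have hsum : (∑ i, (c + t • δ) i) = 1 := by
      have : ∀ i, (c + t • δ) i = c i + t * δ i := fun i => rfl
      simp [this, Finset.sum_add_distrib, ← Finset.mul_sum, hsumδ, hc.1]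
    have := hc.2 (c + t • δ) hsum
    rw [expand t] at this
    linarith
  have ha : 0 ≤ a := by positivity
  have hb0 : b = 0 := lin_coeff_zero a b ha hnn
  have h1 := expand 1
  have hcc : c + (1:ℝ) • δ = c' := by rw [one_smul, hδ]; abel
  rw [hcc, hb0] at h1
  rw [h1]; ring

lemma toE_mul {n m p : ℕ} (A : Matrix (Fin n) (Fin m) ℝ) (B : Matrix (Fin m) (Fin p) ℝ)
    (x : EuclideanSpace ℝ (Fin p)) :
    Matrix.toEuclideanLin (A * B) x = Matrix.toEuclideanLin A (Matrix.toEuclideanLin B x) := by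
  simp [Matrix.toEuclideanLin_apply, Matrix.mulVec_mulVec]

lemma toE_adj {n m : ℕ} (M : Matrix (Fin n) (Fin m) ℝ)
    (x : EuclideanSpace ℝ (Fin m)) (y : EuclideanSpace ℝ (Fin n)) :
    (inner ℝ (Matrix.toEuclideanLin M x) y : ℝ) = inner ℝ x (Matrix.toEuclideanLin Mᵀ y) := by
  have hT : Mᵀ = Mᴴ := by
    ext i j; simp [Matrix.conjTranspose]
  rw [hT, Matrix.toEuclideanLin_conjTranspose_eq_adjoint, LinearMap.adjoint_inner_right]

/-- Stability of the regularized extrapolation coefficients: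
`‖c̃^λ − c^λ‖ ≤ (‖P‖/λ)·‖c^λ‖` where `P = RᵀR − R̃ᵀR̃`. -/
theorem rna_stability (d k : ℕ) (R Rt : Matrix (Fin d) (Fin (k+1)) ℝ)
    (lam : ℝ) (hlam : 0 < lam)
    (c ct : EuclideanSpace ℝ (Fin (k+1)))
    (hc : IsRNACoeff R lam c) (hct : IsRNACoeff Rt lam ct)
    (P : Matrix (Fin (k+1)) (Fin (k+1)) ℝ) (hP : P = Rᵀ * R - Rtᵀ * Rt) :
    ‖ct - c‖ ≤ (opNorm P / lam) * ‖c‖ := by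
  set L := fun (M : Matrix (Fin d) (Fin (k+1)) ℝ) => Matrix.toEuclideanLin M with hL
  set δ : EuclideanSpace ℝ (Fin (k+1)) := ct - c with hδ
  have h1 := key R lam hlam.le c ct hc hct.1
  have h2 := key Rt lam hlam.le ct c hct hc.1
  have hctδ : ct = c + δ := by rw [hδ]; abel
  have e1 : ‖Matrix.toEuclideanLin R ct‖^2
      = ‖Matrix.toEuclideanLin R c‖^2 + 2 * (inner ℝ (Matrix.toEuclideanLin R c) (Matrix.toEuclideanLin R δ) : ℝ) + ‖Matrix.toEuclideanLin R δ‖^2 := by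
    rw [hctδ, map_add, norm_add_sq_real]
  have e2 : ‖Matrix.toEuclideanLin Rt ct‖^2
      = ‖Matrix.toEuclideanLin Rt c‖^2 + 2 * (inner ℝ (Matrix.toEuclideanLin Rt c) (Matrix.toEuclideanLin Rt δ) : ℝ) + ‖Matrix.toEuclideanLin Rt δ‖^2 := by
    rw [hctδ, map_add, norm_add_sq_real]
  have e3 : ‖Matrix.toEuclideanLin Rt (c - ct)‖ = ‖Matrix.toEuclideanLin Rt δ‖ := by
    rw [show c - ct = -δ by rw [hδ]; abel, map_neg, norm_neg]
  have e4 : ‖c - ct‖ = ‖δ‖ := norm_sub_rev c ct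
  rw [e3, e4] at h2
  have key_ineq : lam * ‖δ‖^2 ≤
      (inner ℝ (Matrix.toEuclideanLin R c) (Matrix.toEuclideanLin R δ) : ℝ)
      - (inner ℝ (Matrix.toEuclideanLin Rt c) (Matrix.toEuclideanLin Rt δ) : ℝ) := by
    nlinarith [sq_nonneg ‖Matrix.toEuclideanLin Rt δ‖]
  have hX : (inner ℝ (Matrix.toEuclideanLin R c) (Matrix.toEuclideanLin R δ) : ℝ)
      - (inner ℝ (Matrix.toEuclideanLin Rt c) (Matrix.toEuclideanLin Rt δ) : ℝ)
      = inner ℝ (Matrix.toEuclideanLin P c) δ := by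
    have e : ∀ M : Matrix (Fin d) (Fin (k+1)) ℝ,
        (inner ℝ (Matrix.toEuclideanLin M c) (Matrix.toEuclideanLin M δ) : ℝ)
        = inner ℝ (Matrix.toEuclideanLin (Mᵀ * M) c) δ := by
      intro M
      rw [toE_mul, toE_adj Mᵀ, Matrix.transpose_transpose]
    rw [e R, e Rt, ← inner_sub_left, hP, map_sub, LinearMap.sub_apply]
  rw [hX] at key_ineq
  have hbound : (inner ℝ (Matrix.toEuclideanLin P c) δ : ℝ) ≤ (opNorm P * ‖c‖) * ‖δ‖ := by
    calc (inner ℝ (Matrix.toEuclideanLin P c) δ : ℝ) ≤ ‖Matrix.toEuclideanLin P c‖ * ‖δ‖ :=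
      real_inner_le_norm _ _
    _ ≤ (opNorm P * ‖c‖) * ‖δ‖ := by
      apply mul_le_mul_of_nonneg_right _ (norm_nonneg _)
      exact (Matrix.toEuclideanLin P).toContinuousLinearMap.le_opNorm c
  have hmain : lam * ‖δ‖^2 ≤ (opNorm P * ‖c‖) * ‖δ‖ := le_trans key_ineq hbound
  have hop : 0 ≤ opNorm P := norm_nonneg _
  rcases eq_or_lt_of_le (norm_nonneg δ) with h0 | h0
  · rw [← h0]
    positivity
  · rw [div_mul_eq_mul_div, le_div_iff₀ hlam]
    rw [pow_two, ← mul_assoc] at hmain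
    have := le_of_mul_le_mul_right hmain h0
    linarith
end

section
/- (Nonlinearity: norm of the coefficients.) Let R̃ ∈ ℝ^{d×(k+1)} and λ > 0, and let c̃^λ be the regularized extrapolation coefficients computed from R̃. Then ‖c̃^λ‖ ≤ √((‖R̃‖² + λ)/((k+1)λ)), and in particular ‖c̃^λ‖ ≤ (1/√(k+1))·√(1 + ‖R̃‖²/λ). -/
open Matrix

/-- Norm bound on the regularized extrapolation coefficients:
`‖c̃^λ‖ ≤ √((‖R̃‖² + λ)/((k+1)λ)) ≤ (1/√(k+1))·√(1 + ‖R̃‖²/λ)`. -/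
theorem rna_coeff_norm_bound (d k : ℕ) (Rt : Matrix (Fin d) (Fin (k+1)) ℝ)
    (lam : ℝ) (hlam : 0 < lam)
    (ct : EuclideanSpace ℝ (Fin (k+1))) (hct : IsRNACoeff Rt lam ct) :
    ‖ct‖ ≤ Real.sqrt ((opNorm Rt ^ 2 + lam) / ((k + 1) * lam)) ∧
    ‖ct‖ ≤ (1 / Real.sqrt (k + 1)) * Real.sqrt (1 + opNorm Rt ^ 2 / lam) := by
  have hk : (0:ℝ) < (k:ℝ) + 1 := by positivity
  -- uniform vector
  set u : EuclideanSpace ℝ (Fin (k+1)) := WithLp.toLp 2 (fun _ => 1 / ((k:ℝ) + 1)) with hu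
  have hsum : (∑ i, u i) = 1 := by
    simp [hu, Finset.sum_const, Finset.card_fin]
    field_simp
  have hnormu : ‖u‖ ^ 2 = 1 / ((k:ℝ) + 1) := by
    rw [EuclideanSpace.norm_eq, Real.sq_sqrt (by positivity)]
    simp [hu, Finset.sum_const, Finset.card_fin, abs_of_pos (by positivity : (0:ℝ) < 1/((k:ℝ)+1))]
    field_simp
  have hMu : ‖Matrix.toEuclideanLin Rt u‖ ≤ opNorm Rt * ‖u‖ :=
    (Matrix.toEuclideanLin Rt).toContinuousLinearMap.le_opNorm u
  have hMu2 : ‖Matrix.toEuclideanLin Rt u‖ ^ 2 ≤ opNorm Rt ^ 2 * ‖u‖ ^ 2 := by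
    rw [← mul_pow]
    exact pow_le_pow_left₀ (norm_nonneg _) hMu 2
  obtain ⟨hcs, hmin⟩ := hct
  have key : lam * ‖ct‖ ^ 2 ≤ (opNorm Rt ^ 2 + lam) / ((k:ℝ) + 1) := by
    have h1 : lam * ‖ct‖ ^ 2 ≤ ‖Matrix.toEuclideanLin Rt ct‖ ^ 2 + lam * ‖ct‖ ^ 2 := by
      nlinarith [norm_nonneg (Matrix.toEuclideanLin Rt ct), sq_nonneg ‖Matrix.toEuclideanLin Rt ct‖]
    have h2 := hmin u hsum
    have h3 : ‖Matrix.toEuclideanLin Rt u‖ ^ 2 + lam * ‖u‖ ^ 2 ≤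
        (opNorm Rt ^ 2 + lam) * ‖u‖ ^ 2 := by nlinarith
    calc lam * ‖ct‖ ^ 2 ≤ _ := h1
      _ ≤ _ := h2
      _ ≤ (opNorm Rt ^ 2 + lam) * ‖u‖ ^ 2 := h3
      _ = (opNorm Rt ^ 2 + lam) / ((k:ℝ) + 1) := by rw [hnormu]; ring
  have hsq : ‖ct‖ ^ 2 ≤ (opNorm Rt ^ 2 + lam) / (((k:ℝ) + 1) * lam) := by
    rw [le_div_iff₀ (by positivity : (0:ℝ) < ((k:ℝ) + 1) * lam)]
    have h4 := mul_le_mul_of_nonneg_right key hk.le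
    rw [div_mul_cancel₀ _ (ne_of_gt hk)] at h4
    nlinarith
  have h1 : ‖ct‖ ≤ Real.sqrt ((opNorm Rt ^ 2 + lam) / ((k + 1) * lam)) := by
    rw [Real.le_sqrt (norm_nonneg _)]
    · exact_mod_cast hsq
    · positivity
  refine ⟨h1, ?_⟩
  have heq : (opNorm Rt ^ 2 + lam) / (((k:ℝ) + 1) * lam) = (1 + opNorm Rt ^ 2 / lam) / ((k:ℝ) + 1) := by
    field_simp
    ring
  calc ‖ct‖ ≤ Real.sqrt ((opNorm Rt ^ 2 + lam) / ((k + 1) * lam)) := h1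
    _ = (1 / Real.sqrt (k + 1)) * Real.sqrt (1 + opNorm Rt ^ 2 / lam) := by
        rw [heq, Real.sqrt_div (by positivity)]
        ring
end

section
/- (Bound on the nonlinearity term.) Let x_0,…,x_k and x̃_0,…,x̃_k be vectors in ℝ^d, let E ∈ ℝ^{d×(k+1)} be the matrix whose i-th column is x_i − x̃_i, let R̃ ∈ ℝ^{d×(k+1)} be any matrix, let λ > 0, and let c̃^λ be the regularized extrapolation coefficients computed from R̃. Then ‖Σ_{i=0}^{k} c̃^λ_i (x̃_i − x_i)‖ ≤ √(1 + ‖R̃‖²/λ) · ‖E‖/√(k+1). -/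
open Matrix

/-- Bound on the nonlinearity term:
`‖Σᵢ c̃^λ_i (x̃ᵢ − xᵢ)‖ ≤ √(1 + ‖R̃‖²/λ) · ‖E‖/√(k+1)`,
where `E` has columns `xᵢ − x̃ᵢ`. -/
theorem rna_nonlinearity_bound (d k : ℕ)
    (x xt : Fin (k+1) → EuclideanSpace ℝ (Fin d))
    (E : Matrix (Fin d) (Fin (k+1)) ℝ)
    (hE : ∀ (j : Fin d) (i : Fin (k+1)), E j i = (x i - xt i) j)
    (Rt : Matrix (Fin d) (Fin (k+1)) ℝ) (lam : ℝ) (hlam : 0 < lam)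
    (ct : EuclideanSpace ℝ (Fin (k+1))) (hct : IsRNACoeff Rt lam ct) :
    ‖∑ i : Fin (k+1), ct i • (xt i - x i)‖ ≤
      Real.sqrt (1 + opNorm Rt ^ 2 / lam) * (opNorm E / Real.sqrt (k + 1)) := by
  have hk1 : (0:ℝ) < (k:ℝ) + 1 := by positivity
  -- Step 1: LHS = ‖E ct‖
  have hLHS : ∑ i : Fin (k+1), ct i • (xt i - x i) = - Matrix.toEuclideanLin E ct := by
    ext j
    have h1 : (∑ i : Fin (k+1), ct i • (xt i - x i)) j
        = ∑ i : Fin (k+1), ct i * (xt i - x i) j := by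
      simp [WithLp.ofLp_sum]
    have h2 : (Matrix.toEuclideanLin E ct) j = ∑ i, E j i * ct i := by
      rw [Matrix.toEuclideanLin_apply]; rfl
    have h3 : (- Matrix.toEuclideanLin E ct) j = -(Matrix.toEuclideanLin E ct j) := rfl
    rw [h1, h3, h2, ← Finset.sum_neg_distrib]
    refine Finset.sum_congr rfl fun i _ => ?_
    have hsub : (xt i - x i) j = xt i j - x i j := rfl
    have hsub2 : (x i - xt i) j = x i j - xt i j := rfl
    rw [hsub, hE j i, hsub2]; ring
  rw [hLHS, norm_neg]
  -- Step 2: bound ‖ct‖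
  set A := opNorm Rt with hA
  have hA0 : 0 ≤ A := norm_nonneg _
  obtain ⟨u, hu⟩ : ∃ u : EuclideanSpace ℝ (Fin (k+1)), ∀ i, u i = 1/((k:ℝ)+1) :=
    ⟨WithLp.toLp 2 (fun _ => 1/((k:ℝ)+1)), fun _ => rfl⟩
  have hsum : (∑ i, u i) = 1 := by
    simp [hu]; field_simp
  have hnormu : ‖u‖^2 = 1/((k:ℝ)+1) := by
    rw [EuclideanSpace.norm_eq, Real.sq_sqrt (by positivity)]
    simp only [hu, Real.norm_eq_abs, abs_of_pos (by positivity : (0:ℝ) < 1/((k:ℝ)+1))]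
    rw [Finset.sum_const, Finset.card_univ, Fintype.card_fin]
    rw [nsmul_eq_mul]; push_cast
    field_simp
  have hRu : ‖Matrix.toEuclideanLin Rt u‖^2 ≤ A^2 * (1/((k:ℝ)+1)) := by
    rw [← hnormu, ← mul_pow]
    exact pow_le_pow_left₀ (norm_nonneg _)
      ((Matrix.toEuclideanLin Rt).toContinuousLinearMap.le_opNorm u) 2
  have hmin := hct.2 u hsum
  have hct2 : ‖ct‖^2 ≤ (1 + A^2/lam) / ((k:ℝ)+1) := by
    rw [le_div_iff₀ hk1]
    have h1 : lam * ‖ct‖^2 ≤ (A^2 + lam) * (1/((k:ℝ)+1)) := by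
      nlinarith [sq_nonneg ‖Matrix.toEuclideanLin Rt ct‖]
    have h1' : lam * ‖ct‖^2 * ((k:ℝ)+1) ≤ A^2 + lam := by
      have := mul_le_mul_of_nonneg_right h1 (le_of_lt hk1)
      calc lam * ‖ct‖^2 * ((k:ℝ)+1) ≤ (A^2 + lam) * (1/((k:ℝ)+1)) * ((k:ℝ)+1) := this
        _ = A^2 + lam := by field_simp
    have h2 : lam * (‖ct‖^2 * ((k:ℝ)+1)) ≤ lam * (1 + A^2/lam) := by
      have hc : lam * (1 + A^2/lam) = A^2 + lam := by field_simp; ring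
      rw [hc]; linarith
    exact le_of_mul_le_mul_left h2 hlam
  have hctn : ‖ct‖ ≤ Real.sqrt (1 + A^2/lam) / Real.sqrt ((k:ℝ)+1) := by
    rw [← Real.sqrt_div (by positivity)]
    calc ‖ct‖ = Real.sqrt (‖ct‖^2) := by rw [Real.sqrt_sq (norm_nonneg _)]
    _ ≤ _ := Real.sqrt_le_sqrt hct2
  -- Step 3: combine
  calc ‖Matrix.toEuclideanLin E ct‖
      ≤ opNorm E * ‖ct‖ := (Matrix.toEuclideanLin E).toContinuousLinearMap.le_opNorm ct
    _ ≤ opNorm E * (Real.sqrt (1 + A^2/lam) / Real.sqrt ((k:ℝ)+1)) :=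
        mul_le_mul_of_nonneg_left hctn (norm_nonneg _)
    _ = Real.sqrt (1 + A^2/lam) * (opNorm E / Real.sqrt ((k:ℝ)+1)) := by ring
end

section
/- (Explicit bound on the stability term.) Fix κ ∈ (0,1), a symmetric matrix G ∈ ℝ^{d×d} with 0 ⪯ G ⪯ (1−κ)I, a point x* ∈ ℝ^d, and iterates x_{t+1} = x* + G(x_t − x*) starting from x_0 ∈ ℝ^d. Then for any vector Δ ∈ ℝ^{k+1}, ‖Σ_{i=0}^{k} Δ_i (x_i − x*)‖ ≤ √(k+1)·‖Δ‖·‖x_0 − x*‖. In particular, if Δ = c̃^λ − c^λ is the gap between the regularized extrapolation coefficients computed from two matrices R̃ and R with P = RᵀR − R̃ᵀR̃, then ‖Σ_{i=0}^{k} Δ_i (x_i − x*)‖ ≤ √(k+1)·(‖P‖/λ)·‖c^λ‖·‖x_0 − x*‖. -/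
open Matrix

-- helper: inner product on EuclideanSpace ℝ vs dotProduct
lemma inner_toEuclideanLin {a b : ℕ} (M : Matrix (Fin a) (Fin b) ℝ)
    (x : EuclideanSpace ℝ (Fin b)) (y : EuclideanSpace ℝ (Fin a)) :
    (inner ℝ (Matrix.toEuclideanLin M x) y : ℝ) =
      dotProduct (M.mulVec (WithLp.equiv 2 (Fin _ → ℝ) x)) (WithLp.equiv 2 (Fin _ → ℝ) y) := by
  simp [PiLp.inner_apply, Matrix.toEuclideanLin_apply, dotProduct, mul_comm]

lemma quadform_nonneg {n : ℕ} {M : Matrix (Fin n) (Fin n) ℝ} (hM : M.PosSemidef)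
    (x : EuclideanSpace ℝ (Fin n)) : 0 ≤ (inner ℝ x (Matrix.toEuclideanLin M x) : ℝ) := by
  have := hM.dotProduct_mulVec_nonneg (WithLp.equiv 2 (Fin _ → ℝ) x)
  simpa [PiLp.inner_apply, Matrix.toEuclideanLin_apply, dotProduct, mul_comm] using this

lemma toEuclideanLin_mul {a b c : ℕ} (A : Matrix (Fin a) (Fin b) ℝ) (B : Matrix (Fin b) (Fin c) ℝ)
    (x : EuclideanSpace ℝ (Fin c)) :
    Matrix.toEuclideanLin (A * B) x = Matrix.toEuclideanLin A (Matrix.toEuclideanLin B x) := by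
  simp [Matrix.toEuclideanLin_apply, Matrix.mulVec_mulVec]

lemma self_adjoint_inner {n : ℕ} (S : Matrix (Fin n) (Fin n) ℝ) (hH : Sᴴ = S)
    (u w : EuclideanSpace ℝ (Fin n)) :
    (inner ℝ (Matrix.toEuclideanLin S u) w : ℝ) = inner ℝ u (Matrix.toEuclideanLin S w) := by
  have hT : Sᵀ = S := by
    ext i j
    conv_rhs => rw [← hH]
    simp [Matrix.conjTranspose_apply]
  have key : ∀ a b : Fin n → ℝ, dotProduct (S.mulVec a) b
      = dotProduct a (S.mulVec b) := by
    intro a b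
    rw [dotProduct_mulVec a S b, ← hT, Matrix.vecMul_transpose, hT,
      dotProduct_comm]
  simpa [PiLp.inner_apply, Matrix.toEuclideanLin_apply, dotProduct, mul_comm]
    using key (WithLp.equiv 2 (Fin _ → ℝ) u) (WithLp.equiv 2 (Fin _ → ℝ) w)

lemma contraction {d : ℕ} {κ : ℝ} (hκ : κ ∈ Set.Ioo (0:ℝ) 1)
    {G : Matrix (Fin d) (Fin d) ℝ} (hG0 : G.PosSemidef)
    (hG1 : ((1 - κ) • (1 : Matrix (Fin d) (Fin d) ℝ) - G).PosSemidef)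
    (v : EuclideanSpace ℝ (Fin d)) : ‖Matrix.toEuclideanLin G v‖ ≤ ‖v‖ := by
  have hκ1 : (0:ℝ) < 1 - κ := by linarith [hκ.2]
  have hκ2 : 1 - κ ≤ 1 := by linarith [hκ.1]
  -- key: for any w, ⟪w, G w⟫ ≤ (1-κ) ‖w‖²
  have key : ∀ w : EuclideanSpace ℝ (Fin d),
      (inner ℝ w (Matrix.toEuclideanLin G w) : ℝ) ≤ (1 - κ) * ‖w‖ ^ 2 := by
    intro w
    have h1 := quadform_nonneg hG1 w
    have h2 : (inner ℝ w (Matrix.toEuclideanLin ((1 - κ) • (1 : Matrix (Fin d) (Fin d) ℝ) - G) w) : ℝ)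
        = (1 - κ) * ‖w‖ ^ 2 - inner ℝ w (Matrix.toEuclideanLin G w) := by
      simp [map_sub, inner_sub_right, Matrix.toEuclideanLin_apply, Matrix.smul_mulVec,
        Matrix.one_mulVec, inner_smul_right]
    linarith [h2 ▸ h1]
  obtain ⟨S, hH, hSS⟩ : ∃ S : Matrix (Fin d) (Fin d) ℝ, Sᴴ = S ∧ S * S = G :=
    by
      open scoped MatrixOrder in
      exact ⟨CFC.sqrt G, (CFC.sqrt_nonneg G).posSemidef.1, CFC.sqrt_mul_sqrt_self G hG0.nonneg⟩
  set LS := Matrix.toEuclideanLin S with hLS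
  have happ : ∀ u, Matrix.toEuclideanLin G u = LS (LS u) := by
    intro u; rw [← hSS, toEuclideanLin_mul]
  have hadj := self_adjoint_inner S hH
  set z := Matrix.toEuclideanLin G v with hz
  set w := LS v with hw
  have hzw : z = LS w := by rw [hz, happ, hw]
  have h1 : ‖z‖ ^ 2 = inner ℝ w (Matrix.toEuclideanLin G w) := by
    rw [← real_inner_self_eq_norm_sq, hzw, hadj, ← happ]
  have h2 : ‖w‖ ^ 2 = inner ℝ v (Matrix.toEuclideanLin G v) := by
    rw [← real_inner_self_eq_norm_sq, hw, hadj, ← happ]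
  have hb1 : ‖z‖ ^ 2 ≤ (1 - κ) * ‖w‖ ^ 2 := h1 ▸ key w
  have hb2 : ‖w‖ ^ 2 ≤ (1 - κ) * ‖v‖ ^ 2 := h2 ▸ key v
  have : ‖z‖ ^ 2 ≤ ‖v‖ ^ 2 := by nlinarith [norm_nonneg w, norm_nonneg v]
  exact (pow_le_pow_iff_left₀ (norm_nonneg z) (norm_nonneg v) two_ne_zero).mp this

lemma gram_inner {d k : ℕ} (M : Matrix (Fin d) (Fin (k+1)) ℝ)
    (a b : EuclideanSpace ℝ (Fin (k+1))) :
    (inner ℝ (Matrix.toEuclideanLin M a) (Matrix.toEuclideanLin M b) : ℝ)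
      = inner ℝ a (Matrix.toEuclideanLin (Mᵀ * M) b) := by
  have key : ∀ u v : Fin (k+1) → ℝ,
      dotProduct (M.mulVec u) (M.mulVec v)
        = dotProduct u ((Mᵀ * M).mulVec v) := by
    intro u v
    rw [← Matrix.mulVec_mulVec, dotProduct_mulVec u Mᵀ, Matrix.vecMul_transpose]
  simpa [PiLp.inner_apply, Matrix.toEuclideanLin_apply, dotProduct, mul_comm]
    using key (WithLp.equiv 2 (Fin _ → ℝ) a) (WithLp.equiv 2 (Fin _ → ℝ) b)

lemma sum_zero_smul_const {k : ℕ} (Δ : EuclideanSpace ℝ (Fin (k+1))) :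
    (∑ i, |Δ i|) ≤ Real.sqrt (k+1) * ‖Δ‖ := by
  have h := sq_sum_le_card_mul_sum_sq (s := (Finset.univ : Finset (Fin (k+1))))
    (f := fun i => |Δ i|)
  have hn : ‖Δ‖ ^ 2 = ∑ i, (Δ i) ^ 2 := by
    rw [EuclideanSpace.norm_eq, Real.sq_sqrt (by positivity)]
    simp [sq_abs]
  have hsq : (∑ i, |Δ i|) ^ 2 ≤ (Real.sqrt (k+1) * ‖Δ‖) ^ 2 := by
    have hk : ((k:ℝ)+1) = Real.sqrt (k+1) ^ 2 := by
      rw [Real.sq_sqrt (by positivity)]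
    calc (∑ i, |Δ i|) ^ 2 ≤ (Finset.univ.card : ℝ) * ∑ i, |Δ i| ^ 2 := by exact_mod_cast h
      _ = ((k:ℝ)+1) * ‖Δ‖ ^ 2 := by
          simp only [hn, sq_abs, Finset.card_univ, Fintype.card_fin]
          push_cast; ring
      _ = (Real.sqrt (k+1) * ‖Δ‖) ^ 2 := by rw [mul_pow, ← hk]
  exact (pow_le_pow_iff_left₀ (by positivity) (by positivity) two_ne_zero).mp hsq

lemma optimality {d k : ℕ} (M : Matrix (Fin d) (Fin (k+1)) ℝ) (lam : ℝ) (hlam : 0 < lam)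
    (c : EuclideanSpace ℝ (Fin (k+1))) (hc : IsRNACoeff M lam c)
    (h : EuclideanSpace ℝ (Fin (k+1))) (hsum : (∑ i, h i) = 0) :
    (inner ℝ (Matrix.toEuclideanLin M c) (Matrix.toEuclideanLin M h) : ℝ)
      + lam * inner ℝ c h = 0 := by
  set L := Matrix.toEuclideanLin M with hL
  set B : ℝ := inner ℝ (L c) (L h) + lam * inner ℝ c h with hB
  set Q : ℝ := ‖L h‖ ^ 2 + lam * ‖h‖ ^ 2 with hQ
  have hQ0 : 0 ≤ Q := by positivity
  have hineq : ∀ t : ℝ, 0 ≤ 2 * t * B + t ^ 2 * Q := by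
    intro t
    have hsum' : (∑ i, (c + t • h) i) = 1 := by
      simp only [PiLp.add_apply, PiLp.smul_apply, smul_eq_mul, Finset.sum_add_distrib,
        ← Finset.mul_sum, hsum, hc.1, mul_zero, add_zero]
    have := hc.2 (c + t • h) hsum'
    have e1 : ‖L (c + t • h)‖ ^ 2 = ‖L c‖ ^ 2 + 2 * t * inner ℝ (L c) (L h) + t ^ 2 * ‖L h‖ ^ 2 := by
      rw [map_add, _root_.map_smul, norm_add_sq_real, inner_smul_right, norm_smul]
      simp [mul_pow]; ring
    have e2 : ‖c + t • h‖ ^ 2 = ‖c‖ ^ 2 + 2 * t * inner ℝ c h + t ^ 2 * ‖h‖ ^ 2 := by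
      rw [norm_add_sq_real, inner_smul_right, norm_smul]
      simp [mul_pow]; ring
    rw [e1, e2] at this
    rw [hB, hQ]; nlinarith [this]
  have h1 := hineq (-B / (Q + 1))
  have hQ1 : (0:ℝ) < Q + 1 := by linarith
  have e : 2 * (-B/(Q+1)) * B + (-B/(Q+1))^2 * Q = (-(B^2) * (Q+2)) / (Q+1)^2 := by
    field_simp; ring
  have h2 : 0 * ((Q+1)^2) ≤ -(B^2) * (Q+2) := (le_div_iff₀ (by positivity)).mp (e ▸ h1)
  have hB2 : B ^ 2 ≤ 0 := by nlinarith
  have hB0 : B = 0 := pow_eq_zero_iff two_ne_zero |>.mp (le_antisymm hB2 (sq_nonneg B))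
  rw [hB] at hB0; linarith

lemma coeff_gap {d k : ℕ} (R Rt : Matrix (Fin d) (Fin (k+1)) ℝ) (lam : ℝ) (hlam : 0 < lam)
    (P : Matrix (Fin (k+1)) (Fin (k+1)) ℝ) (hP : P = Rᵀ * R - Rtᵀ * Rt)
    (c ct : EuclideanSpace ℝ (Fin (k+1)))
    (hc : IsRNACoeff R lam c) (hct : IsRNACoeff Rt lam ct) :
    ‖ct - c‖ ≤ opNorm P / lam * ‖c‖ := by
  set Δ := ct - c with hΔ
  have hΔsum : (∑ i, Δ i) = 0 := by
    simp only [hΔ, PiLp.sub_apply, Finset.sum_sub_distrib, hc.1, hct.1, sub_self]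
  have hoptR := optimality R lam hlam c hc Δ hΔsum
  have hoptRt := optimality Rt lam hlam ct hct Δ hΔsum
  set L := Matrix.toEuclideanLin R
  set Lt := Matrix.toEuclideanLin Rt
  have hmain : lam * ‖Δ‖ ^ 2 ≤ inner ℝ c (Matrix.toEuclideanLin P Δ) := by
    have e1 : ‖Lt Δ‖ ^ 2 + lam * ‖Δ‖ ^ 2
        = (inner ℝ (Lt ct) (Lt Δ) + lam * inner ℝ ct Δ)
          - (inner ℝ (Lt c) (Lt Δ) + lam * inner ℝ c Δ) := by
      rw [← real_inner_self_eq_norm_sq (Lt Δ), ← real_inner_self_eq_norm_sq Δ]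
      have : Lt Δ = Lt ct - Lt c := by rw [hΔ, map_sub]
      rw [this, inner_sub_left (𝕜 := ℝ), hΔ, inner_sub_left (𝕜 := ℝ)]
      ring
    have e2 : inner ℝ c (Matrix.toEuclideanLin P Δ)
        = (inner ℝ (L c) (L Δ) + lam * inner ℝ c Δ)
          - (inner ℝ (Lt c) (Lt Δ) + lam * inner ℝ c Δ) := by
      rw [hP, map_sub (Matrix.toEuclideanLin (𝕜 := ℝ) (m := Fin (k+1)) (n := Fin (k+1))) (Rᵀ * R) (Rtᵀ * Rt), LinearMap.sub_apply, inner_sub_right (𝕜 := ℝ),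
        ← gram_inner R c Δ, ← gram_inner Rt c Δ]
      ring
    have hq : 0 ≤ ‖Lt Δ‖ ^ 2 := by positivity
    rw [e2]; rw [hoptRt] at e1; linarith
  have hop : ‖Matrix.toEuclideanLin P Δ‖ ≤ opNorm P * ‖Δ‖ := by
    have h := (Matrix.toEuclideanLin P).toContinuousLinearMap.le_opNorm Δ
    simpa [opNorm] using h
  have hcs : (inner ℝ c (Matrix.toEuclideanLin P Δ) : ℝ) ≤ ‖c‖ * (opNorm P * ‖Δ‖) :=
    le_trans (real_inner_le_norm _ _) (mul_le_mul_of_nonneg_left hop (norm_nonneg _))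
  rcases (norm_nonneg Δ).eq_or_lt with h0 | hpos
  · rw [← h0]
    have : 0 ≤ opNorm P := norm_nonneg _
    positivity
  · rw [div_mul_eq_mul_div, le_div_iff₀ hlam]
    nlinarith [hmain, hcs, hpos]

/-- Explicit bound on the stability term: for iterates of the linearized model,
`‖Σᵢ Δᵢ (xᵢ − x*)‖ ≤ √(k+1)·‖Δ‖·‖x₀ − x*‖`, and with `Δ = c̃^λ − c^λ`,
`‖Σᵢ Δᵢ (xᵢ − x*)‖ ≤ √(k+1)·(‖P‖/λ)·‖c^λ‖·‖x₀ − x*‖`. -/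
theorem rna_stability_term_bound (d k : ℕ) (κ : ℝ) (hκ : κ ∈ Set.Ioo (0:ℝ) 1)
    (G : Matrix (Fin d) (Fin d) ℝ) (hGsymm : G.IsSymm)
    (hG0 : G.PosSemidef)
    (hG1 : ((1 - κ) • (1 : Matrix (Fin d) (Fin d) ℝ) - G).PosSemidef)
    (xs : EuclideanSpace ℝ (Fin d)) (x : ℕ → EuclideanSpace ℝ (Fin d))
    (hx : ∀ t : ℕ, x (t+1) = xs + Matrix.toEuclideanLin G (x t - xs)) :
    (∀ Δ : EuclideanSpace ℝ (Fin (k+1)),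
      ‖∑ i : Fin (k+1), Δ i • (x i - xs)‖ ≤ Real.sqrt (k + 1) * ‖Δ‖ * ‖x 0 - xs‖) ∧
    (∀ (R Rt : Matrix (Fin d) (Fin (k+1)) ℝ) (lam : ℝ), 0 < lam →
      ∀ (P : Matrix (Fin (k+1)) (Fin (k+1)) ℝ), P = Rᵀ * R - Rtᵀ * Rt →
      ∀ c ct : EuclideanSpace ℝ (Fin (k+1)),
        IsRNACoeff R lam c → IsRNACoeff Rt lam ct →
        ‖∑ i : Fin (k+1), (ct i - c i) • (x i - xs)‖ ≤
          Real.sqrt (k + 1) * (opNorm P / lam) * ‖c‖ * ‖x 0 - xs‖) := by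
  have hnorm : ∀ t, ‖x t - xs‖ ≤ ‖x 0 - xs‖ := by
    intro t
    induction t with
    | zero => exact le_refl _
    | succ t ih =>
      have e : x (t+1) - xs = Matrix.toEuclideanLin G (x t - xs) := by
        rw [hx t, add_sub_cancel_left]
      rw [e]
      exact (contraction hκ hG0 hG1 _).trans ih
  have part1 : ∀ Δ : EuclideanSpace ℝ (Fin (k+1)),
      ‖∑ i : Fin (k+1), Δ i • (x i - xs)‖ ≤ Real.sqrt (k + 1) * ‖Δ‖ * ‖x 0 - xs‖ := by
    intro Δ
    calc ‖∑ i : Fin (k+1), Δ i • (x i - xs)‖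
        ≤ ∑ i : Fin (k+1), ‖Δ i • (x i - xs)‖ := norm_sum_le _ _
      _ = ∑ i : Fin (k+1), |Δ i| * ‖x i - xs‖ := by
          simp [norm_smul, Real.norm_eq_abs]
      _ ≤ ∑ i : Fin (k+1), |Δ i| * ‖x 0 - xs‖ :=
          Finset.sum_le_sum fun i _ => mul_le_mul_of_nonneg_left (hnorm i) (abs_nonneg _)
      _ = (∑ i : Fin (k+1), |Δ i|) * ‖x 0 - xs‖ := by rw [Finset.sum_mul]
      _ ≤ Real.sqrt (k + 1) * ‖Δ‖ * ‖x 0 - xs‖ :=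
          mul_le_mul_of_nonneg_right (sum_zero_smul_const Δ) (norm_nonneg _)
  refine ⟨part1, ?_⟩
  intro R Rt lam hlam P hP c ct hc hct
  have hgap := coeff_gap R Rt lam hlam P hP c ct hc hct
  have h1 := part1 (ct - c)
  simp only [PiLp.sub_apply] at h1
  calc ‖∑ i : Fin (k+1), (ct i - c i) • (x i - xs)‖
      ≤ Real.sqrt (k + 1) * ‖ct - c‖ * ‖x 0 - xs‖ := h1
    _ ≤ Real.sqrt (k + 1) * (opNorm P / lam * ‖c‖) * ‖x 0 - xs‖ := by
        have h2 : (0:ℝ) ≤ Real.sqrt (k+1) := Real.sqrt_nonneg _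
        have h3 : (0:ℝ) ≤ ‖x 0 - xs‖ := norm_nonneg _
        exact mul_le_mul_of_nonneg_right (mul_le_mul_of_nonneg_left hgap h2) h3
    _ = Real.sqrt (k + 1) * (opNorm P / lam) * ‖c‖ * ‖x 0 - xs‖ := by ring
end

section
/- (Acceleration.) Fix κ ∈ (0,1), a symmetric matrix G ∈ ℝ^{d×d} with 0 ⪯ G ⪯ (1−κ)I, a point x* ∈ ℝ^d with x_0 ≠ x*, and iterates x_{t+1} = x* + G(x_t − x*) for t = 0,…,k. Let R ∈ ℝ^{d×(k+1)} have columns r_i = x_{i+1} − x_i, let λ > 0, let c^λ be the regularized extrapolation coefficients computed from R, and set λ̄ = λ/‖x_0 − x*‖². Then ‖Σ_{i=0}^{k} c^λ_i x_i − x*‖ ≤ (1/κ)·√( S_κ(k, λ̄)·‖x_0 − x*‖² − λ‖c^λ‖² ). -/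
open Matrix Polynomial

/-- Value `S_κ(k, α)` of the regularized Chebyshev polynomial problem: the infimum over
polynomials `p` of degree at most `k` with `p(1) = 1` of
`(max_{x ∈ [0,1−κ]} p(x)²) + α · (sum of squared coefficients of p)`. -/
noncomputable def regChebyshev (κ : ℝ) (k : ℕ) (α : ℝ) : ℝ :=
  sInf { v : ℝ | ∃ p : Polynomial ℝ, p.natDegree ≤ k ∧ p.eval 1 = 1 ∧
    v = sSup ((fun x : ℝ => (p.eval x) ^ 2) '' Set.Icc (0:ℝ) (1 - κ)) +
        α * ∑ i ∈ Finset.range (k+1), (p.coeff i) ^ 2 }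

section aux
variable {d : ℕ}

lemma euclid_norm_sq {n : Type*} [Fintype n] (v : EuclideanSpace ℝ n) :
    ‖v‖ ^ 2 = ∑ i, (v i) ^ 2 := by
  rw [EuclideanSpace.norm_eq, Real.sq_sqrt (by positivity)]
  simp [Real.norm_eq_abs, sq_abs]

lemma euclid_sum_apply {n : Type*} [Fintype n] {ι : Type*} (s : Finset ι)
    (f : ι → EuclideanSpace ℝ n) (j : n) : (∑ i ∈ s, f i) j = ∑ i ∈ s, f i j := by
  classical
  induction s using Finset.induction_on with
  | empty => rfl
  | insert _ _ h ih => rw [Finset.sum_insert h, Finset.sum_insert h, ← ih]; rfl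

lemma pow_eig (T : EuclideanSpace ℝ (Fin d) →ₗ[ℝ] EuclideanSpace ℝ (Fin d))
    (v : EuclideanSpace ℝ (Fin d)) (μ : ℝ) (h : T v = μ • v) (n : ℕ) :
    (T ^ n) v = μ ^ n • v := by
  induction n with
  | zero => simp
  | succ n ih =>
    rw [pow_succ, Module.End.mul_apply, h, _root_.map_smul, ih, smul_smul]
    ring_nf

lemma aeval_eig (T : EuclideanSpace ℝ (Fin d) →ₗ[ℝ] EuclideanSpace ℝ (Fin d))
    (v : EuclideanSpace ℝ (Fin d)) (μ : ℝ) (h : T v = μ • v) (q : ℝ[X]) :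
    (aeval T q) v = q.eval μ • v := by
  induction q using Polynomial.induction_on' with
  | add p r hp hr => rw [map_add, LinearMap.add_apply, hp, hr, eval_add, add_smul]
  | monomial n a =>
    rw [aeval_monomial, eval_monomial]
    simp only [Module.End.mul_apply, Module.algebraMap_end_apply]
    rw [pow_eig T v μ h n, smul_smul]

lemma repr_aeval (T : EuclideanSpace ℝ (Fin d) →ₗ[ℝ] EuclideanSpace ℝ (Fin d))
    (b : OrthonormalBasis (Fin d) ℝ (EuclideanSpace ℝ (Fin d))) (μ : Fin d → ℝ)
    (heig : ∀ i, T (b i) = μ i • b i) (q : ℝ[X]) (v : EuclideanSpace ℝ (Fin d)) (i : Fin d) :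
    b.repr ((aeval T q) v) i = q.eval (μ i) * b.repr v i := by
  conv_lhs => rw [← b.sum_repr v]
  rw [map_sum]
  simp only [_root_.map_smul, aeval_eig T _ _ (heig _) q]
  rw [map_sum]
  simp only [_root_.map_smul, OrthonormalBasis.repr_self]
  have hap : ∀ (f : Fin d → EuclideanSpace ℝ (Fin d)),
      (∑ x, f x) i = ∑ x, f x i := fun f => by
    induction (Finset.univ : Finset (Fin d)) using Finset.induction_on with
    | empty => simp
    | insert _ _ h ih => simp_all [Finset.sum_insert h]
  rw [hap]
  simp only [PiLp.smul_apply, EuclideanSpace.single_apply, smul_eq_mul,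
    mul_ite, mul_zero]
  rw [Finset.sum_ite_eq Finset.univ i]
  simp [mul_comm]

lemma norm_sq_aeval (T : EuclideanSpace ℝ (Fin d) →ₗ[ℝ] EuclideanSpace ℝ (Fin d))
    (b : OrthonormalBasis (Fin d) ℝ (EuclideanSpace ℝ (Fin d))) (μ : Fin d → ℝ)
    (heig : ∀ i, T (b i) = μ i • b i) (q : ℝ[X]) (v : EuclideanSpace ℝ (Fin d)) :
    ‖(aeval T q) v‖ ^ 2 = ∑ i, (q.eval (μ i)) ^ 2 * (b.repr v i) ^ 2 := by
  rw [← b.repr.norm_map ((aeval T q) v), euclid_norm_sq]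
  congr 1
  ext i
  rw [repr_aeval T b μ heig q v i, mul_pow]

lemma norm_sq_repr (b : OrthonormalBasis (Fin d) ℝ (EuclideanSpace ℝ (Fin d)))
    (v : EuclideanSpace ℝ (Fin d)) : ‖v‖ ^ 2 = ∑ i, (b.repr v i) ^ 2 := by
  rw [← b.repr.norm_map v, euclid_norm_sq]

end aux

set_option maxHeartbeats 1000000 in
/-- Acceleration bound: the extrapolation with the regularized coefficients computed from
the residual matrix `R` of the linearized iterates satisfies
`‖Σᵢ c^λ_i xᵢ − x*‖ ≤ (1/κ)·√(S_κ(k, λ̄)·‖x₀ − x*‖² − λ‖c^λ‖²)` with `λ̄ = λ/‖x₀ − x*‖²`. -/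
theorem rna_acceleration_bound (d k : ℕ) (κ : ℝ) (hκ : κ ∈ Set.Ioo (0:ℝ) 1)
    (G : Matrix (Fin d) (Fin d) ℝ) (hGsymm : G.IsSymm)
    (hG0 : G.PosSemidef)
    (hG1 : ((1 - κ) • (1 : Matrix (Fin d) (Fin d) ℝ) - G).PosSemidef)
    (xs : EuclideanSpace ℝ (Fin d)) (x : ℕ → EuclideanSpace ℝ (Fin d))
    (hne : x 0 ≠ xs)
    (hx : ∀ t ≤ k, x (t+1) = xs + Matrix.toEuclideanLin G (x t - xs))
    (R : Matrix (Fin d) (Fin (k+1)) ℝ)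
    (hR : ∀ (j : Fin d) (i : Fin (k+1)), R j i = (x (i+1) - x i) j)
    (lam : ℝ) (hlam : 0 < lam)
    (c : EuclideanSpace ℝ (Fin (k+1))) (hc : IsRNACoeff R lam c) :
    ‖(∑ i : Fin (k+1), c i • x i) - xs‖ ≤
      (1/κ) * Real.sqrt (regChebyshev κ k (lam / ‖x 0 - xs‖ ^ 2) * ‖x 0 - xs‖ ^ 2
        - lam * ‖c‖ ^ 2) := by
  obtain ⟨hκ0, hκ1⟩ := hκ
  set T : EuclideanSpace ℝ (Fin d) →ₗ[ℝ] EuclideanSpace ℝ (Fin d) :=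
    Matrix.toEuclideanLin G with hTdef
  have hGh : G.IsHermitian := by
    rw [Matrix.IsHermitian]
    simp
    exact hGsymm
  have hsymm : T.IsSymmetric := Matrix.isHermitian_iff_isSymmetric.mp hGh
  set b := hsymm.eigenvectorBasis finrank_euclideanSpace_fin with hbdef
  set μ := hsymm.eigenvalues finrank_euclideanSpace_fin with hμdef
  have heig : ∀ i, T (b i) = μ i • b i := fun i =>
    hsymm.apply_eigenvectorBasis finrank_euclideanSpace_fin i
  -- inner products vs matrix quadratic forms
  have hinner : ∀ v : EuclideanSpace ℝ (Fin d),
      (inner ℝ v (T v) : ℝ) = (fun j => v j) ⬝ᵥ (G *ᵥ fun j => v j) := by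
    intro v
    rw [PiLp.inner_apply]
    simp only [dotProduct, Matrix.mulVec, starRingEnd_apply, star_trivial, Real.inner_apply]
    rfl
  -- eigenvalue bounds
  have hbnorm : ∀ i, ‖b i‖ = 1 := fun i => b.orthonormal.1 i
  have hμeq : ∀ i, (inner ℝ (b i) (T (b i)) : ℝ) = μ i := by
    intro i
    rw [heig i, real_inner_smul_right, real_inner_self_eq_norm_sq, hbnorm i]
    ring
  have hμ0 : ∀ i, 0 ≤ μ i := by
    intro i
    rw [← hμeq i, hinner]
    simpa using hG0.dotProduct_mulVec_nonneg (fun j => b i j)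
  have hμ1 : ∀ i, μ i ≤ 1 - κ := by
    intro i
    have h2 := hG1.dotProduct_mulVec_nonneg (fun j => b i j)
    have hone : ((fun j => b i j) ⬝ᵥ (fun j => b i j)) = 1 := by
      have := euclid_norm_sq (b i)
      rw [hbnorm i] at this
      simpa [dotProduct, sq] using this.symm
    rw [Matrix.sub_mulVec, Matrix.smul_mulVec, Matrix.one_mulVec,
      dotProduct_sub, dotProduct_smul] at h2
    simp only [star_trivial] at h2
    rw [hone] at h2
    have := hμeq i
    rw [hinner] at this
    simp only [star_trivial, smul_eq_mul, mul_one] at h2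
    linarith [this]
  -- iterates
  set v0 := x 0 - xs with hv0def
  have hiter : ∀ t, t ≤ k + 1 → x t - xs = (T ^ t) v0 := by
    intro t ht
    induction t with
    | zero => simp [v0]
    | succ t ih =>
      have ht' : t ≤ k := Nat.succ_le_succ_iff.mp ht
      rw [hx t ht', add_sub_cancel_left, ih (Nat.le_trans (Nat.le_succ t) ht),
        pow_succ', Module.End.mul_apply]
  -- the polynomial associated to a coefficient vector
  set P : EuclideanSpace ℝ (Fin (k+1)) → ℝ[X] :=
    fun cc => ∑ i : Fin (k+1), C (cc i) * X ^ (i : ℕ) with hPdef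
  have haevalP : ∀ cc, (aeval T (P cc)) v0 = ∑ i : Fin (k+1), cc i • ((T ^ (i:ℕ)) v0) := by
    intro cc
    rw [hPdef]
    rw [map_sum, LinearMap.sum_apply]
    refine Finset.sum_congr rfl fun i _ => ?_
    simp [_root_.map_mul, map_pow, aeval_X, aeval_C, Module.algebraMap_end_apply,
      Module.End.mul_apply]
  -- residual vectors
  have hxi : ∀ i : Fin (k+1), x (i+1) - x i = (T ^ ((i:ℕ)+1)) v0 - (T ^ (i:ℕ)) v0 := by
    intro i
    have h1 : x ((i:ℕ)+1) - x i = (x ((i:ℕ)+1) - xs) - (x i - xs) := by abel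
    rw [h1, hiter _ (Nat.succ_le_succ (Nat.lt_succ_iff.mp i.isLt)),
      hiter _ (Nat.le_succ_of_le (Nat.lt_succ_iff.mp i.isLt))]
  have hresv : ∀ cc : EuclideanSpace ℝ (Fin (k+1)),
      Matrix.toEuclideanLin R cc = ∑ i : Fin (k+1), cc i • (x (i+1) - x i) := by
    intro cc
    ext j
    rw [euclid_sum_apply]
    rw [Matrix.toEuclideanLin_apply]
    show (R *ᵥ fun i => cc i) j = _
    rw [Matrix.mulVec, dotProduct]
    refine Finset.sum_congr rfl fun i _ => ?_
    rw [hR j i, PiLp.smul_apply, smul_eq_mul, mul_comm]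
  have hres : ∀ cc : EuclideanSpace ℝ (Fin (k+1)),
      Matrix.toEuclideanLin R cc = (aeval T ((X - 1) * P cc)) v0 := by
    intro cc
    rw [hresv cc, _root_.map_mul, Module.End.mul_apply, haevalP]
    simp only [map_sub, aeval_X, _root_.map_one, LinearMap.sub_apply, Module.End.one_apply]
    rw [map_sum]
    simp only [_root_.map_smul]
    rw [← Finset.sum_sub_distrib]
    refine Finset.sum_congr rfl fun i _ => ?_
    rw [hxi i, ← smul_sub, pow_succ', Module.End.mul_apply]
  -- extrapolation identity
  have hextr : (∑ i : Fin (k+1), c i • x i) - xs = (aeval T (P c)) v0 := by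
    rw [haevalP]
    have h1 : (∑ i : Fin (k+1), c i • x i) - xs = ∑ i : Fin (k+1), c i • (x i - xs) := by
      simp only [smul_sub]
      rw [Finset.sum_sub_distrib, ← Finset.sum_smul, hc.1, one_smul]
    rw [h1]
    refine Finset.sum_congr rfl fun i _ => ?_
    rw [hiter _ (Nat.le_succ_of_le (Nat.lt_succ_iff.mp i.isLt))]
  -- norms via the eigenbasis
  set w : Fin d → ℝ := fun i => b.repr v0 i with hwdef
  have hnormR : ∀ cc, ‖Matrix.toEuclideanLin R cc‖^2
      = ∑ i, ((μ i - 1) * (P cc).eval (μ i))^2 * (w i)^2 := by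
    intro cc
    rw [hres cc, norm_sq_aeval T b μ heig]
    refine Finset.sum_congr rfl fun i _ => ?_
    rw [eval_mul, eval_sub, eval_X, eval_one]
  have hWpos : (0:ℝ) < ‖v0‖^2 := by
    have hv0ne : v0 ≠ 0 := sub_ne_zero.mpr hne
    exact pow_pos (norm_pos_iff.mpr hv0ne) 2
  have hWsum : ‖v0‖^2 = ∑ i, (w i)^2 := norm_sq_repr b v0
  set α := lam / ‖v0‖^2 with hαdef
  have hlamαW : lam = α * ‖v0‖^2 := by
    rw [hαdef, div_mul_cancel₀ _ (ne_of_gt hWpos)]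
  -- Key 1: lower bound via strong convexity of I - T
  have key1 : κ^2 * ‖(aeval T (P c)) v0‖^2 ≤ ‖Matrix.toEuclideanLin R c‖^2 := by
    rw [hnormR c, norm_sq_aeval T b μ heig, Finset.mul_sum]
    refine Finset.sum_le_sum fun i _ => ?_
    have hk2 : κ^2 ≤ (μ i - 1)^2 := by nlinarith [hμ1 i]
    have h3 : (0:ℝ) ≤ ((P c).eval (μ i))^2 * (w i)^2 := by positivity
    rw [mul_pow]
    nlinarith [mul_le_mul_of_nonneg_right hk2 h3]
  -- Key 2: upper bound via regChebyshev
  have key2 : ‖Matrix.toEuclideanLin R c‖^2 + lam * ‖c‖^2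
      ≤ regChebyshev κ k α * ‖v0‖^2 := by
    have hlb : ∀ vv ∈ {v : ℝ | ∃ p : Polynomial ℝ, p.natDegree ≤ k ∧ p.eval 1 = 1 ∧
        v = sSup ((fun x : ℝ => (p.eval x) ^ 2) '' Set.Icc (0:ℝ) (1 - κ)) +
        α * ∑ i ∈ Finset.range (k+1), (p.coeff i) ^ 2},
        (‖Matrix.toEuclideanLin R c‖^2 + lam * ‖c‖^2) / ‖v0‖^2 ≤ vv := by
      rintro vv ⟨q, hqdeg, hq1, rfl⟩
      rw [div_le_iff₀ hWpos]
      set M := sSup ((fun x : ℝ => (q.eval x) ^ 2) '' Set.Icc (0:ℝ) (1 - κ)) with hMdef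
      have hbdd : BddAbove ((fun x : ℝ => (q.eval x) ^ 2) '' Set.Icc (0:ℝ) (1 - κ)) :=
        (isCompact_Icc.image ((Polynomial.continuous q).pow 2)).bddAbove
      have hMle : ∀ i : Fin d, (q.eval (μ i))^2 ≤ M :=
        fun i => le_csSup hbdd ⟨μ i, ⟨hμ0 i, hμ1 i⟩, rfl⟩
      set c' : EuclideanSpace ℝ (Fin (k+1)) := WithLp.toLp 2 (fun i => q.coeff i) with hc'def
      have hsum1 : (∑ i, c' i) = 1 := by
        show (∑ i : Fin (k+1), q.coeff (i:ℕ)) = 1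
        rw [show (∑ i : Fin (k+1), q.coeff i) = ∑ i ∈ Finset.range (k+1), q.coeff i from
          Fin.sum_univ_eq_sum_range (fun i => q.coeff i) (k+1)]
        rw [← hq1, Polynomial.eval_eq_sum_range' (Nat.lt_succ_of_le hqdeg)]
        simp
      have hPc' : P c' = q := by
        show (∑ i : Fin (k+1), C (c' i) * X ^ (i:ℕ)) = q
        rw [show (∑ i : Fin (k+1), C (c' i) * X ^ (i:ℕ))
            = ∑ i ∈ Finset.range (k+1), C (q.coeff i) * X ^ i from
          Fin.sum_univ_eq_sum_range (fun i => C (q.coeff i) * X ^ i) (k+1)]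
        conv_rhs => rw [Polynomial.as_sum_range' q (k+1) (Nat.lt_succ_of_le hqdeg)]
        refine Finset.sum_congr rfl fun i _ => ?_
        rw [Polynomial.C_mul_X_pow_eq_monomial]
      have hopt := hc.2 c' hsum1
      have hRc' : ‖Matrix.toEuclideanLin R c'‖^2 ≤ M * ‖v0‖^2 := by
        rw [hnormR c', hPc', hWsum, Finset.mul_sum]
        refine Finset.sum_le_sum fun i _ => ?_
        have h1 : (μ i - 1)^2 ≤ 1 := by nlinarith [hμ0 i, hμ1 i]
        rw [mul_pow]
        nlinarith [mul_le_mul_of_nonneg_right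
            (mul_le_mul_of_nonneg_right h1 (sq_nonneg (q.eval (μ i)))) (sq_nonneg (w i)),
          mul_le_mul_of_nonneg_right (hMle i) (sq_nonneg (w i))]
      have hnc' : ‖c'‖^2 = ∑ i ∈ Finset.range (k+1), (q.coeff i)^2 := by
        rw [euclid_norm_sq]
        exact Fin.sum_univ_eq_sum_range (fun i => (q.coeff i)^2) (k+1)
      calc ‖Matrix.toEuclideanLin R c‖^2 + lam * ‖c‖^2
          ≤ ‖Matrix.toEuclideanLin R c'‖^2 + lam * ‖c'‖^2 := hopt
        _ ≤ M * ‖v0‖^2 + α * (∑ i ∈ Finset.range (k+1), (q.coeff i)^2) * ‖v0‖^2 := by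
            rw [hnc', hlamαW]
            have : α * ‖v0‖^2 * (∑ i ∈ Finset.range (k+1), (q.coeff i)^2)
                = α * (∑ i ∈ Finset.range (k+1), (q.coeff i)^2) * ‖v0‖^2 := by ring
            linarith [hRc']
        _ = (M + α * ∑ i ∈ Finset.range (k+1), (q.coeff i)^2) * ‖v0‖^2 := by ring
    have hne' : {v : ℝ | ∃ p : Polynomial ℝ, p.natDegree ≤ k ∧ p.eval 1 = 1 ∧
        v = sSup ((fun x : ℝ => (p.eval x) ^ 2) '' Set.Icc (0:ℝ) (1 - κ)) +
        α * ∑ i ∈ Finset.range (k+1), (p.coeff i) ^ 2}.Nonempty :=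
      ⟨_, 1, by simp, by simp, rfl⟩
    have hmain : (‖Matrix.toEuclideanLin R c‖^2 + lam * ‖c‖^2) / ‖v0‖^2
        ≤ regChebyshev κ k α := le_csInf hne' hlb
    rw [div_le_iff₀ hWpos] at hmain
    exact hmain
  -- conclusion
  rw [hextr]
  have hD : κ^2 * ‖(aeval T (P c)) v0‖^2
      ≤ regChebyshev κ k α * ‖v0‖^2 - lam * ‖c‖^2 := by linarith [key1, key2]
  have hsq : κ * ‖(aeval T (P c)) v0‖
      ≤ Real.sqrt (regChebyshev κ k α * ‖v0‖^2 - lam * ‖c‖^2) := by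
    apply Real.le_sqrt_of_sq_le
    calc (κ * ‖(aeval T (P c)) v0‖)^2 = κ^2 * ‖(aeval T (P c)) v0‖^2 := by ring
      _ ≤ _ := hD
  rw [show (1/κ) * Real.sqrt (regChebyshev κ k α * ‖v0‖^2 - lam * ‖c‖^2)
      = Real.sqrt (regChebyshev κ k α * ‖v0‖^2 - lam * ‖c‖^2) / κ by ring,
    le_div_iff₀ hκ0, mul_comm]
  exact hsq
end

section
/- (Explicit deterministic convergence bound for RNA.) Fix κ ∈ (0,1), a symmetric matrix G ∈ ℝ^{d×d} with 0 ⪯ G ⪯ (1−κ)I, x* ∈ ℝ^d, x_0 ≠ x*, and noiseless iterates x_{t+1} = x* + G(x_t − x*) for t = 0,…,k. Let x̃_0 = x_0, x̃_1, …, x̃_{k+1} ∈ ℝ^d be arbitrary, let R and R̃ be the matrices of residuals of (x_t) and (x̃_t) respectively, let E ∈ ℝ^{d×(k+1)} have columns x_i − x̃_i, let P = RᵀR − R̃ᵀR̃, let λ > 0, let c̃^λ be the regularized extrapolation coefficients computed from R̃, and set λ̄ = λ/‖x_0 − x*‖². Then ‖Σ_{i=0}^{k} c̃^λ_i x̃_i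 − x*‖ ≤ ‖x_0 − x*‖·√(S_κ(k, λ̄))·√( 1/κ² + (k+1)‖x_0 − x*‖²‖P‖²/λ³ ) + (‖E‖/√(k+1))·√(1 + ‖R̃‖²/λ). -/
open Matrix Polynomial

open scoped RealInnerProductSpace
open scoped RealInnerProductSpace
namespace RNAaux


lemma equiv_apply {n : ℕ} (a : EuclideanSpace ℝ (Fin n)) (i : Fin n) :
    (WithLp.equiv 2 (Fin n → ℝ)) a i = a i := rfl

lemma inner_eq_dot {n : ℕ} (a b : EuclideanSpace ℝ (Fin n)) :
    ⟪a, b⟫ = (WithLp.equiv 2 (Fin n → ℝ) a) ⬝ᵥ (WithLp.equiv 2 (Fin n → ℝ) b) := by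
  simp [PiLp.inner_apply, dotProduct, RCLike.inner_apply, equiv_apply, mul_comm]

lemma toEuclideanLin_apply' {d n : ℕ} (M : Matrix (Fin d) (Fin n) ℝ)
    (v : EuclideanSpace ℝ (Fin n)) (j : Fin d) :
    (Matrix.toEuclideanLin M v) j = ∑ i, M j i * v i := by
  rw [Matrix.toEuclideanLin_apply]
  rfl

lemma toEuclideanLin_mul {d n m : ℕ} (A : Matrix (Fin d) (Fin n) ℝ) (B : Matrix (Fin n) (Fin m) ℝ)
    (v : EuclideanSpace ℝ (Fin m)) :
    Matrix.toEuclideanLin (A * B) v = Matrix.toEuclideanLin A (Matrix.toEuclideanLin B v) := by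
  rw [Matrix.toEuclideanLin_apply, Matrix.toEuclideanLin_apply, Matrix.toEuclideanLin_apply]
  simp [Matrix.mulVec_mulVec]

lemma toEuclideanLin_one {n : ℕ} (v : EuclideanSpace ℝ (Fin n)) :
    Matrix.toEuclideanLin (1 : Matrix (Fin n) (Fin n) ℝ) v = v := by
  rw [Matrix.toEuclideanLin_apply]
  simp

lemma transpose_eq_conjTranspose {d n : ℕ} (M : Matrix (Fin d) (Fin n) ℝ) : Mᵀ = Mᴴ := by
  ext i j; simp [Matrix.conjTranspose_apply]

lemma inner_mul_left {d n : ℕ} (M : Matrix (Fin d) (Fin n) ℝ)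
    (a : EuclideanSpace ℝ (Fin n)) (b : EuclideanSpace ℝ (Fin d)) :
    ⟪Matrix.toEuclideanLin M a, b⟫ = ⟪a, Matrix.toEuclideanLin Mᵀ b⟫ := by
  rw [transpose_eq_conjTranspose, Matrix.toEuclideanLin_conjTranspose_eq_adjoint]
  exact (LinearMap.adjoint_inner_right _ _ _).symm


lemma le_opNorm' {d n : ℕ} (M : Matrix (Fin d) (Fin n) ℝ) (v : EuclideanSpace ℝ (Fin n)) :
    ‖Matrix.toEuclideanLin M v‖ ≤ ‖(Matrix.toEuclideanLin M).toContinuousLinearMap‖ * ‖v‖ := by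
  have := (Matrix.toEuclideanLin M).toContinuousLinearMap.le_opNorm v
  simpa using this

lemma quad_expand {d n : ℕ} (M : Matrix (Fin d) (Fin n) ℝ) (lam : ℝ)
    (c v : EuclideanSpace ℝ (Fin n)) (t : ℝ) :
    ‖Matrix.toEuclideanLin M (c + t • v)‖^2 + lam * ‖c + t • v‖^2 =
      (‖Matrix.toEuclideanLin M c‖^2 + lam * ‖c‖^2) +
      2 * t * (⟪Matrix.toEuclideanLin M c, Matrix.toEuclideanLin M v⟫ + lam * ⟪c, v⟫) +
      t^2 * (‖Matrix.toEuclideanLin M v‖^2 + lam * ‖v‖^2) := by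
  rw [map_add, LinearMap.map_smul]
  rw [norm_add_sq_real, norm_add_sq_real]
  rw [norm_smul, inner_smul_right, norm_smul, inner_smul_right]
  simp only [Real.norm_eq_abs, mul_pow, sq_abs]
  ring

lemma fo_of_min {d n : ℕ} (M : Matrix (Fin d) (Fin n) ℝ) (lam : ℝ) (hlam : 0 < lam)
    (c : EuclideanSpace ℝ (Fin n)) (hc1 : (∑ i, c i) = 1)
    (hmin : ∀ c' : EuclideanSpace ℝ (Fin n), (∑ i, c' i) = 1 →
      ‖Matrix.toEuclideanLin M c‖ ^ 2 + lam * ‖c‖ ^ 2 ≤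
        ‖Matrix.toEuclideanLin M c'‖ ^ 2 + lam * ‖c'‖ ^ 2)
    (v : EuclideanSpace ℝ (Fin n)) (hv : (∑ i, v i) = 0) :
    ⟪Matrix.toEuclideanLin M c, Matrix.toEuclideanLin M v⟫ + lam * ⟪c, v⟫ = 0 := by
  set b := ⟪Matrix.toEuclideanLin M c, Matrix.toEuclideanLin M v⟫ + lam * ⟪c, v⟫ with hb
  set a := ‖Matrix.toEuclideanLin M v‖^2 + lam * ‖v‖^2 with ha
  have key : ∀ t : ℝ, 0 ≤ 2 * t * b + t^2 * a := by
    intro t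
    have hsum : (∑ i, (c + t • v) i) = 1 := by
      simp only [PiLp.add_apply, PiLp.smul_apply, smul_eq_mul, Finset.sum_add_distrib,
        ← Finset.mul_sum, hc1, hv]
      ring
    have h := hmin (c + t • v) hsum
    rw [quad_expand] at h
    rw [← hb, ← ha] at h
    linarith
  by_cases hva : a = 0
  · have hn2 : ‖v‖^2 = 0 := by
      have h1 : 0 ≤ ‖Matrix.toEuclideanLin M v‖^2 := sq_nonneg _
      have h2 : 0 ≤ lam * ‖v‖^2 := by positivity
      have h3 : lam * ‖v‖^2 = 0 := by linarith [ha ▸ hva]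
      have := mul_eq_zero.mp h3
      rcases this with h | h
      · exact absurd h (ne_of_gt hlam)
      · exact h
    have hv0 : v = 0 := by
      have : ‖v‖ = 0 := by
        have := sq_eq_zero_iff.mp hn2; exact this
      simpa using this
    simp [hb, hv0]
  · have hapos : 0 < a := lt_of_le_of_ne (by rw [ha]; positivity) (Ne.symm hva)
    have hk := key (-b / a)
    have h2 : 2 * (-b/a) * b + (-b/a)^2 * a = -(b^2/a) := by
      field_simp; ring
    rw [h2] at hk
    have hble : b^2 ≤ 0 := by
      have h3 : 0 ≤ -(b^2/a) * a := mul_nonneg hk hapos.le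
      have h4 : -(b^2/a) * a = -b^2 := by field_simp
      linarith [h4 ▸ h3]
    have : b^2 = 0 := le_antisymm hble (sq_nonneg b)
    exact sq_eq_zero_iff.mp this

lemma min_of_fo {d n : ℕ} (M : Matrix (Fin d) (Fin n) ℝ) (lam : ℝ) (hlam : 0 ≤ lam)
    (c : EuclideanSpace ℝ (Fin n)) (hc1 : (∑ i, c i) = 1)
    (hfo : ∀ v : EuclideanSpace ℝ (Fin n), (∑ i, v i) = 0 →
      ⟪Matrix.toEuclideanLin M c, Matrix.toEuclideanLin M v⟫ + lam * ⟪c, v⟫ = 0) :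
    ∀ c' : EuclideanSpace ℝ (Fin n), (∑ i, c' i) = 1 →
      ‖Matrix.toEuclideanLin M c‖ ^ 2 + lam * ‖c‖ ^ 2 ≤
        ‖Matrix.toEuclideanLin M c'‖ ^ 2 + lam * ‖c'‖ ^ 2 := by
  intro c' hc'
  have hv : (∑ i, (c' - c) i) = 0 := by
    simp only [PiLp.sub_apply, Finset.sum_sub_distrib, hc1, hc']; ring
  have hfo' := hfo (c' - c) hv
  have hexp := quad_expand M lam c (c' - c) 1
  have hc'' : c + (1:ℝ) • (c' - c) = c' := by simp
  rw [hc''] at hexp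
  rw [hexp, hfo']
  have h0 : 0 ≤ ‖Matrix.toEuclideanLin M (c' - c)‖^2 + lam * ‖c' - c‖^2 := by positivity
  nlinarith


lemma conj_diag_mul {d : ℕ} (U : Matrix (Fin d) (Fin d) ℝ) (hUU : star U * U = 1)
    (w w' : Fin d → ℝ) :
    (U * Matrix.diagonal w * star U) * (U * Matrix.diagonal w' * star U) =
      U * Matrix.diagonal (fun j => w j * w' j) * star U := by
  rw [show (U * Matrix.diagonal w * star U) * (U * Matrix.diagonal w' * star U) =
    U * (Matrix.diagonal w * (star U * U) * Matrix.diagonal w') * star U from by noncomm_ring,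
    hUU]
  simp [Matrix.diagonal_mul_diagonal]

lemma aeval_conj {d : ℕ} (G : Matrix (Fin d) (Fin d) ℝ) (hG : G.IsHermitian) (p : Polynomial ℝ) :
    Polynomial.aeval G p =
      (hG.eigenvectorUnitary : Matrix (Fin d) (Fin d) ℝ) *
        Matrix.diagonal (fun j => p.eval (hG.eigenvalues j)) *
        star (hG.eigenvectorUnitary : Matrix (Fin d) (Fin d) ℝ) := by
  set U := (hG.eigenvectorUnitary : Matrix (Fin d) (Fin d) ℝ) with hU
  have hUU : star U * U = 1 := hG.eigenvectorUnitary.2.1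
  have hUU' : U * star U = 1 := hG.eigenvectorUnitary.2.2
  have hspec : G = U * Matrix.diagonal (fun j => hG.eigenvalues j) * star U := by
    have := hG.spectral_theorem
    simpa [Function.comp] using this
  induction p using Polynomial.induction_on' with
  | add p q hp hq =>
    rw [map_add, hp, hq]
    simp only [Polynomial.eval_add]
    rw [← Matrix.diagonal_add]
    noncomm_ring
  | monomial n a =>
    rw [Polynomial.aeval_monomial]
    have hpow : G ^ n = U * (Matrix.diagonal fun j => hG.eigenvalues j ^ n) * star U := by
      induction n with
      | zero =>
        simp only [pow_zero]
        rw [Matrix.diagonal_one, Matrix.mul_one, hUU']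
      | succ m ih =>
        calc G ^ (m+1) = G ^ m * G := pow_succ G m
          _ = (U * (Matrix.diagonal fun j => hG.eigenvalues j ^ m) * star U) *
              (U * Matrix.diagonal (fun j => hG.eigenvalues j) * star U) := by
            rw [ih]; exact congrArg _ hspec
          _ = U * (Matrix.diagonal fun j => hG.eigenvalues j ^ (m+1)) * star U := by
            rw [conj_diag_mul U hUU]
            have h9 : (fun j => hG.eigenvalues j ^ m * hG.eigenvalues j)
                = fun j => hG.eigenvalues j ^ (m+1) := by
              funext j; rw [pow_succ]
            rw [h9]
    rw [hpow, Algebra.algebraMap_eq_smul_one, smul_mul_assoc, one_mul,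
      ← smul_mul_assoc, ← Matrix.mul_smul]
    congr 2
    ext i j
    simp only [Matrix.smul_apply, Matrix.diagonal_apply, Polynomial.eval_monomial,
      smul_eq_mul]
    split_ifs <;> ring

lemma norm_conj_unit {d : ℕ} (U : Matrix (Fin d) (Fin d) ℝ) (hUU : Uᵀ * U = 1)
    (v : EuclideanSpace ℝ (Fin d)) :
    ‖Matrix.toEuclideanLin U v‖ = ‖v‖ := by
  have h : ‖Matrix.toEuclideanLin U v‖^2 = ‖v‖^2 := by
    rw [← real_inner_self_eq_norm_sq, ← real_inner_self_eq_norm_sq]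
    rw [inner_mul_left, ← toEuclideanLin_mul, hUU, toEuclideanLin_one]
  have h1 := norm_nonneg (Matrix.toEuclideanLin U v)
  have h2 := norm_nonneg v
  nlinarith

lemma norm_diag_le {d : ℕ} (w : Fin d → ℝ) (bnd : ℝ) (hbnd : 0 ≤ bnd)
    (h : ∀ j, |w j| ≤ bnd) (v : EuclideanSpace ℝ (Fin d)) :
    ‖Matrix.toEuclideanLin (Matrix.diagonal w) v‖ ≤ bnd * ‖v‖ := by
  have happ : ∀ j, (Matrix.toEuclideanLin (Matrix.diagonal w) v) j = w j * v j := by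
    intro j
    rw [Matrix.toEuclideanLin_apply]
    show (Matrix.diagonal w *ᵥ (WithLp.equiv 2 (Fin d → ℝ) v)) j = w j * v j
    rw [Matrix.mulVec_diagonal]
    rfl
  have hsq : ‖Matrix.toEuclideanLin (Matrix.diagonal w) v‖^2 ≤ (bnd * ‖v‖)^2 := by
    rw [← real_inner_self_eq_norm_sq]
    rw [PiLp.inner_apply]
    simp only [RCLike.inner_apply, starRingEnd_apply, star_trivial]
    calc ∑ j, (Matrix.toEuclideanLin (Matrix.diagonal w) v) j *
          (Matrix.toEuclideanLin (Matrix.diagonal w) v) j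
        = ∑ j, (w j)^2 * (v j)^2 := by
          apply Finset.sum_congr rfl; intro j _; rw [happ j]; ring
      _ ≤ ∑ j, bnd^2 * (v j)^2 := by
          apply Finset.sum_le_sum; intro j _
          have := h j
          have h2 : (w j)^2 ≤ bnd^2 := by nlinarith [abs_nonneg (w j), sq_abs (w j)]
          nlinarith [sq_nonneg (v j)]
      _ = (bnd * ‖v‖)^2 := by
          rw [← Finset.mul_sum]
          have : ∑ j, (v j)^2 = ‖v‖^2 := by
            rw [← real_inner_self_eq_norm_sq, PiLp.inner_apply]
            simp only [RCLike.inner_apply, starRingEnd_apply, star_trivial]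
            apply Finset.sum_congr rfl; intro j _; ring
          rw [this]; ring
  have h1 := norm_nonneg (Matrix.toEuclideanLin (Matrix.diagonal w) v)
  have h2 : 0 ≤ bnd * ‖v‖ := by positivity
  nlinarith




-- eigenvalue range
lemma eig_range {d : ℕ} (κ : ℝ) (G : Matrix (Fin d) (Fin d) ℝ)
    (hG0 : G.PosSemidef)
    (hG1 : ((1 - κ) • (1 : Matrix (Fin d) (Fin d) ℝ) - G).PosSemidef) (j : Fin d) :
    hG0.1.eigenvalues j ∈ Set.Icc (0:ℝ) (1 - κ) := by
  constructor
  · exact hG0.eigenvalues_nonneg j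
  · set μ := hG0.1.eigenvalues j with hμ
    set v := (WithLp.equiv 2 (Fin d → ℝ)) (hG0.1.eigenvectorBasis j) with hv
    have hGv : G *ᵥ v = μ • v := hG0.1.mulVec_eigenvectorBasis j
    have hvv : v ⬝ᵥ v = 1 := by
      have hnorm : ‖hG0.1.eigenvectorBasis j‖ = 1 := (hG0.1.eigenvectorBasis).orthonormal.1 j
      have : ‖hG0.1.eigenvectorBasis j‖^2 = 1 := by rw [hnorm]; norm_num
      rw [← real_inner_self_eq_norm_sq, PiLp.inner_apply] at this
      simp only [RCLike.inner_apply, starRingEnd_apply, star_trivial] at this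
      rw [dotProduct]
      convert this using 1
      exact Finset.sum_congr rfl fun i _ => rfl
    have h2 := hG1.dotProduct_mulVec_nonneg v
    have h3 : ((1 - κ) • (1 : Matrix (Fin d) (Fin d) ℝ) - G) *ᵥ v = (1 - κ) • v - μ • v := by
      rw [Matrix.sub_mulVec, Matrix.smul_mulVec, Matrix.one_mulVec, hGv]
    rw [h3] at h2
    have h4 : star v = v := by funext i; simp
    rw [h4] at h2
    have h5 : v ⬝ᵥ ((1 - κ) • v - μ • v) = (1 - κ) - μ := by
      rw [dotProduct_sub, dotProduct_smul, dotProduct_smul, hvv]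
      simp
    rw [h5] at h2
    simp at h2
    linarith



lemma spec_bound {d : ℕ} (G : Matrix (Fin d) (Fin d) ℝ) (hG : G.IsHermitian)
    (p : Polynomial ℝ) (bnd : ℝ) (hbnd : 0 ≤ bnd)
    (h : ∀ j, |p.eval (hG.eigenvalues j)| ≤ bnd) (v : EuclideanSpace ℝ (Fin d)) :
    ‖Matrix.toEuclideanLin (Polynomial.aeval G p) v‖ ≤ bnd * ‖v‖ := by
  rw [aeval_conj G hG p]
  set U := (hG.eigenvectorUnitary : Matrix (Fin d) (Fin d) ℝ) with hU
  have hUU : Uᵀ * U = 1 := by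
    rw [transpose_eq_conjTranspose]
    exact hG.eigenvectorUnitary.2.1
  have hUU' : (star U)ᵀ * (star U) = 1 := by
    rw [transpose_eq_conjTranspose]
    show star (star U) * star U = 1
    rw [star_star]
    exact hG.eigenvectorUnitary.2.2
  rw [toEuclideanLin_mul, toEuclideanLin_mul]
  rw [norm_conj_unit U hUU]
  calc ‖Matrix.toEuclideanLin (Matrix.diagonal fun j => p.eval (hG.eigenvalues j))
        (Matrix.toEuclideanLin (star U) v)‖
      ≤ bnd * ‖Matrix.toEuclideanLin (star U) v‖ :=
        norm_diag_le _ bnd hbnd h _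
    _ = bnd * ‖v‖ := by rw [norm_conj_unit (star U) hUU']

lemma norm_sq_eq {n : ℕ} (v : EuclideanSpace ℝ (Fin n)) : ‖v‖^2 = ∑ i, (v i)^2 := by
  rw [← real_inner_self_eq_norm_sq, PiLp.inner_apply]
  simp only [RCLike.inner_apply, starRingEnd_apply, star_trivial]
  exact Finset.sum_congr rfl fun i _ => (sq (v i)).symm ▸ by ring

lemma sum_apply' {n m : ℕ} (f : Fin m → EuclideanSpace ℝ (Fin n)) (j : Fin n) :
    (∑ i, f i) j = ∑ i, f i j := by
  rw [WithLp.ofLp_sum]; exact Finset.sum_apply j Finset.univ (fun i => (f i).ofLp)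

lemma posSemidef_inner_nonneg {n : ℕ} (N : Matrix (Fin n) (Fin n) ℝ) (hN : N.PosSemidef)
    (w : EuclideanSpace ℝ (Fin n)) : 0 ≤ ⟪Matrix.toEuclideanLin N w, w⟫ := by
  have h := hN.dotProduct_mulVec_nonneg ((WithLp.equiv 2 (Fin n → ℝ)) w)
  rw [inner_eq_dot]
  have heq : (WithLp.equiv 2 (Fin n → ℝ)) (Matrix.toEuclideanLin N w) =
      N *ᵥ ((WithLp.equiv 2 (Fin n → ℝ)) w) := by
    rw [Matrix.toEuclideanLin_apply]; rfl
  rw [heq]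
  have hstar : star ((WithLp.equiv 2 (Fin n → ℝ)) w) = (WithLp.equiv 2 (Fin n → ℝ)) w := by
    funext i; simp
  rw [hstar] at h
  rwa [dotProduct_comm]

lemma quadform_eq {d n : ℕ} (R : Matrix (Fin d) (Fin n) ℝ) (lam : ℝ)
    (a b : EuclideanSpace ℝ (Fin n)) :
    ⟪Matrix.toEuclideanLin R a, Matrix.toEuclideanLin R b⟫ + lam * ⟪a, b⟫ =
      ⟪a, Matrix.toEuclideanLin (Rᵀ * R + lam • (1 : Matrix (Fin n) (Fin n) ℝ)) b⟫ := by
  rw [map_add, LinearMap.add_apply, inner_add_right]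
  congr 1
  · rw [toEuclideanLin_mul]
    exact inner_mul_left R a (Matrix.toEuclideanLin R b)
  · rw [_root_.map_smul, LinearMap.smul_apply, toEuclideanLin_one, inner_smul_right]

lemma exists_copt {d n : ℕ} (R : Matrix (Fin d) (Fin n) ℝ) (lam : ℝ) (hlam : 0 < lam)
    (i0 : Fin n) :
    ∃ c : EuclideanSpace ℝ (Fin n), (∑ i, c i) = 1 ∧
      ∀ v : EuclideanSpace ℝ (Fin n), (∑ i, v i) = 0 →
        ⟪Matrix.toEuclideanLin R c, Matrix.toEuclideanLin R v⟫ + lam * ⟪c, v⟫ = 0 := by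
  set A := Rᵀ * R + lam • (1 : Matrix (Fin n) (Fin n) ℝ) with hA
  set T := Matrix.toEuclideanLin A with hT
  have hinj : Function.Injective T := by
    intro u v huv
    have h0 : T (u - v) = 0 := by rw [map_sub, huv, sub_self]
    have hq0 : ⟪(u-v), T (u-v)⟫ = 0 := by rw [h0, inner_zero_right]
    have hq : ⟪Matrix.toEuclideanLin R (u-v), Matrix.toEuclideanLin R (u-v)⟫ +
        lam * ⟪(u-v), (u-v)⟫ = 0 := by rw [quadform_eq]; exact hq0
    have h1 : (0:ℝ) ≤ ‖Matrix.toEuclideanLin R (u-v)‖^2 := sq_nonneg _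
    have h1' : ⟪Matrix.toEuclideanLin R (u-v), Matrix.toEuclideanLin R (u-v)⟫
        = ‖Matrix.toEuclideanLin R (u-v)‖^2 := real_inner_self_eq_norm_sq _
    have h2' : ⟪(u-v), (u-v)⟫ = ‖u-v‖^2 := real_inner_self_eq_norm_sq _
    rw [h1', h2'] at hq
    have h3 : ‖u - v‖^2 = 0 := by nlinarith [sq_nonneg (‖u-v‖)]
    have h4 : ‖u - v‖ = 0 := by
      have := sq_eq_zero_iff.mp h3; exact this
    have := norm_eq_zero.mp h4
    exact sub_eq_zero.mp this
  have hsurj : Function.Surjective T := LinearMap.injective_iff_surjective.mp hinj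
  set ones : EuclideanSpace ℝ (Fin n) := WithLp.toLp 2 (fun _ => (1:ℝ)) with hones
  obtain ⟨u, hu⟩ := hsurj ones
  have hinnerones : ∀ w : EuclideanSpace ℝ (Fin n), ⟪w, ones⟫ = ∑ i, w i := by
    intro w
    rw [PiLp.inner_apply]
    simp only [RCLike.inner_apply, starRingEnd_apply, star_trivial]
    exact Finset.sum_congr rfl fun i _ => by simp [hones]
  set s : ℝ := ∑ i, u i with hs
  have hs_eq : s = ‖Matrix.toEuclideanLin R u‖^2 + lam * ‖u‖^2 := by
    have h6 : ⟪u, T u⟫ = s := by rw [hu, hinnerones u]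
    calc s = ⟪u, T u⟫ := h6.symm
      _ = ⟪Matrix.toEuclideanLin R u, Matrix.toEuclideanLin R u⟫ + lam * ⟪u, u⟫ :=
          (quadform_eq R lam u u).symm
      _ = ‖Matrix.toEuclideanLin R u‖^2 + lam * ‖u‖^2 := by
          rw [real_inner_self_eq_norm_sq, real_inner_self_eq_norm_sq]
  have hu0 : u ≠ 0 := by
    intro h
    rw [h, map_zero] at hu
    have : (ones : EuclideanSpace ℝ (Fin n)) i0 = 0 := by rw [← hu]; rfl
    simp [hones] at this
  have hspos : 0 < s := by
    rw [hs_eq]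
    have h2 : 0 < ‖u‖^2 := by
      have : ‖u‖ ≠ 0 := fun hh => hu0 (norm_eq_zero.mp hh)
      positivity
    nlinarith [sq_nonneg ‖Matrix.toEuclideanLin R u‖]
  refine ⟨s⁻¹ • u, ?_, ?_⟩
  · have : (∑ i, (s⁻¹ • u) i) = s⁻¹ * ∑ i, u i := by
      simp only [PiLp.smul_apply, smul_eq_mul, ← Finset.mul_sum]
    rw [this, ← hs, inv_mul_cancel₀ (ne_of_gt hspos)]
  · intro v hv
    have hsym : ⟪Matrix.toEuclideanLin R (s⁻¹ • u), Matrix.toEuclideanLin R v⟫ +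
        lam * ⟪(s⁻¹ • u), v⟫ = ⟪v, T (s⁻¹ • u)⟫ := by
      rw [show ⟪Matrix.toEuclideanLin R (s⁻¹ • u), Matrix.toEuclideanLin R v⟫ =
        ⟪Matrix.toEuclideanLin R v, Matrix.toEuclideanLin R (s⁻¹ • u)⟫ from
          real_inner_comm _ _,
        show ⟪(s⁻¹ • u : EuclideanSpace ℝ (Fin n)), v⟫ = ⟪v, s⁻¹ • u⟫ from
          real_inner_comm _ _]
      exact quadform_eq R lam v (s⁻¹ • u)
    have hTsu : T (s⁻¹ • u) = s⁻¹ • ones := by rw [_root_.map_smul, hu]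
    rw [hsym, hTsu, real_inner_smul_right, hinnerones v, hv, mul_zero]

lemma cs2 (p q a b : ℝ) (hp : 0 ≤ p) (hq : 0 ≤ q) (ha : 0 ≤ a) (hb : 0 ≤ b) :
    p*a + q*b ≤ Real.sqrt (p^2+q^2) * Real.sqrt (a^2+b^2) := by
  rw [← Real.sqrt_mul (by positivity)]
  have h1 : p*a + q*b = Real.sqrt ((p*a+q*b)^2) := (Real.sqrt_sq (by positivity)).symm
  rw [h1]
  apply Real.sqrt_le_sqrt
  nlinarith [sq_nonneg (p*b - q*a)]

end RNAaux

set_option maxHeartbeats 2000000 in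
/-- Explicit deterministic convergence bound for RNA, combining the stability,
nonlinearity and acceleration bounds. -/
theorem rna_deterministic_bound (d k : ℕ) (κ : ℝ) (hκ : κ ∈ Set.Ioo (0:ℝ) 1)
    (G : Matrix (Fin d) (Fin d) ℝ) (hGsymm : G.IsSymm)
    (hG0 : G.PosSemidef)
    (hG1 : ((1 - κ) • (1 : Matrix (Fin d) (Fin d) ℝ) - G).PosSemidef)
    (xs : EuclideanSpace ℝ (Fin d)) (x xt : ℕ → EuclideanSpace ℝ (Fin d))
    (hne : x 0 ≠ xs)
    (hx : ∀ t ≤ k, x (t+1) = xs + Matrix.toEuclideanLin G (x t - xs))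
    (h0 : xt 0 = x 0)
    (R Rt E : Matrix (Fin d) (Fin (k+1)) ℝ)
    (hR : ∀ (j : Fin d) (i : Fin (k+1)), R j i = (x (i+1) - x i) j)
    (hRt : ∀ (j : Fin d) (i : Fin (k+1)), Rt j i = (xt (i+1) - xt i) j)
    (hE : ∀ (j : Fin d) (i : Fin (k+1)), E j i = (x i - xt i) j)
    (P : Matrix (Fin (k+1)) (Fin (k+1)) ℝ) (hP : P = Rᵀ * R - Rtᵀ * Rt)
    (lam : ℝ) (hlam : 0 < lam)
    (ct : EuclideanSpace ℝ (Fin (k+1))) (hct : IsRNACoeff Rt lam ct) :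
    ‖(∑ i : Fin (k+1), ct i • xt i) - xs‖ ≤
      ‖x 0 - xs‖ * Real.sqrt (regChebyshev κ k (lam / ‖x 0 - xs‖ ^ 2)) *
        Real.sqrt (1 / κ ^ 2 + (k + 1) * ‖x 0 - xs‖ ^ 2 * opNorm P ^ 2 / lam ^ 3) +
      (opNorm E / Real.sqrt (k + 1)) * Real.sqrt (1 + opNorm Rt ^ 2 / lam) := by
  classical
  obtain ⟨hκ0, hκ1⟩ := hκ
  set z := x 0 - xs with hzdef
  have hz : z ≠ 0 := sub_ne_zero.mpr hne
  have hnz : 0 < ‖z‖ := norm_pos_iff.mpr hz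
  have hherm : G.IsHermitian := hG0.1
  have heig : ∀ j, hherm.eigenvalues j ∈ Set.Icc (0:ℝ) (1-κ) := RNAaux.eig_range κ G hG0 hG1
  -- iterates
  have hxi : ∀ i : ℕ, i ≤ k+1 → x i - xs = Matrix.toEuclideanLin (G^i) z := by
    intro i
    induction i with
    | zero => intro _; rw [pow_zero, RNAaux.toEuclideanLin_one]
    | succ t ih =>
      intro h
      have ht : t ≤ k := by omega
      have ih' := ih (by omega)
      rw [hx t ht, add_sub_cancel_left, ih', ← RNAaux.toEuclideanLin_mul, ← pow_succ']
  -- polynomial matrices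
  set Mc : EuclideanSpace ℝ (Fin (k+1)) → Matrix (Fin d) (Fin d) ℝ :=
    fun c => ∑ i : Fin (k+1), c i • G ^ (i:ℕ) with hMcdef
  set pc : EuclideanSpace ℝ (Fin (k+1)) → Polynomial ℝ :=
    fun c => ∑ i : Fin (k+1), Polynomial.monomial (i:ℕ) (c i) with hpcdef
  have hMc_aeval : ∀ c, Mc c = Polynomial.aeval G (pc c) := by
    intro c
    rw [hpcdef, map_sum]
    refine Finset.sum_congr rfl fun i _ => ?_
    rw [Polynomial.aeval_monomial, ← Algebra.smul_def]
  have hpc_eval : ∀ c (t : ℝ), (pc c).eval t = ∑ i : Fin (k+1), c i * t^(i:ℕ) := by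
    intro c t
    rw [hpcdef, Polynomial.eval_finset_sum]
    exact Finset.sum_congr rfl fun i _ => Polynomial.eval_monomial
  have hMcz : ∀ c, Matrix.toEuclideanLin (Mc c) z = ∑ i : Fin (k+1), c i • (x ↑i - xs) := by
    intro c
    rw [hMcdef, map_sum, LinearMap.sum_apply]
    refine Finset.sum_congr rfl fun i _ => ?_
    rw [_root_.map_smul, LinearMap.smul_apply]
    congr 1
    exact (hxi i (by omega)).symm
  have hRc : ∀ c : EuclideanSpace ℝ (Fin (k+1)),
      Matrix.toEuclideanLin R c = ∑ i : Fin (k+1), c i • (x (↑i+1) - x ↑i) := by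
    intro c
    refine PiLp.ext fun j => ?_
    rw [RNAaux.toEuclideanLin_apply', RNAaux.sum_apply']
    refine Finset.sum_congr rfl fun i _ => ?_
    rw [hR j i, PiLp.smul_apply, smul_eq_mul, mul_comm]
  have hEc : Matrix.toEuclideanLin E ct = ∑ i : Fin (k+1), ct i • (x ↑i - xt ↑i) := by
    refine PiLp.ext fun j => ?_
    rw [RNAaux.toEuclideanLin_apply', RNAaux.sum_apply']
    refine Finset.sum_congr rfl fun i _ => ?_
    rw [hE j i, PiLp.smul_apply, smul_eq_mul, mul_comm]
  have hRGc : ∀ c : EuclideanSpace ℝ (Fin (k+1)),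
      Matrix.toEuclideanLin R c =
        Matrix.toEuclideanLin G (Matrix.toEuclideanLin (Mc c) z) -
          Matrix.toEuclideanLin (Mc c) z := by
    intro c
    rw [hRc c, hMcz c, map_sum, ← Finset.sum_sub_distrib]
    refine Finset.sum_congr rfl fun i _ => ?_
    rw [_root_.map_smul, ← smul_sub]
    congr 1
    have hgi : Matrix.toEuclideanLin G (x ↑i - xs) = x (↑i+1) - xs := by
      rw [hx ↑i (by omega)]; abel
    rw [hgi]; abel
  -- lower bound for (1-G)
  have hlow : ∀ w : EuclideanSpace ℝ (Fin d),
      κ * ‖w‖ ≤ ‖Matrix.toEuclideanLin G w - w‖ := by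
    intro w
    have hneg : Matrix.toEuclideanLin G w - w =
        -(Matrix.toEuclideanLin (1 - G) w) := by
      rw [map_sub, LinearMap.sub_apply, RNAaux.toEuclideanLin_one]; abel
    rw [hneg, norm_neg]
    have hmat : (1 : Matrix (Fin d) (Fin d) ℝ) - G = κ • 1 + ((1-κ) • 1 - G) := by
      rw [sub_smul, one_smul]; abel
    have hsplit : ⟪Matrix.toEuclideanLin (1 - G) w, w⟫ =
        κ * ⟪w, w⟫ + ⟪Matrix.toEuclideanLin ((1-κ) • (1 : Matrix (Fin d) (Fin d) ℝ) - G) w, w⟫ := by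
      rw [hmat, map_add, LinearMap.add_apply, inner_add_left, _root_.map_smul,
        LinearMap.smul_apply, RNAaux.toEuclideanLin_one, real_inner_smul_left]
    have hpsd := RNAaux.posSemidef_inner_nonneg _ hG1 w
    have hcs := real_inner_le_norm (Matrix.toEuclideanLin (1 - G) w) w
    have hns : ⟪w, w⟫ = ‖w‖^2 := real_inner_self_eq_norm_sq w
    rcases eq_or_lt_of_le (norm_nonneg w) with hw0 | hwpos
    · rw [← hw0]; simp [norm_nonneg]
    · have : κ * ‖w‖^2 ≤ ‖Matrix.toEuclideanLin (1 - G) w‖ * ‖w‖ := by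
        rw [← hns]; nlinarith
      nlinarith
  -- optimal coefficients for R
  obtain ⟨c1, hc1sum, hc1fo⟩ := RNAaux.exists_copt R lam hlam ⟨0, Nat.succ_pos k⟩
  set F := ‖Matrix.toEuclideanLin R c1‖^2 + lam * ‖c1‖^2 with hFdef
  have hmin1 := RNAaux.min_of_fo R lam hlam.le c1 hc1sum hc1fo
  -- Chebyshev comparison
  set Sset : Set ℝ := { v : ℝ | ∃ p : Polynomial ℝ, p.natDegree ≤ k ∧ p.eval 1 = 1 ∧
    v = sSup ((fun x : ℝ => (p.eval x) ^ 2) '' Set.Icc (0:ℝ) (1 - κ)) +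
        (lam / ‖z‖^2) * ∑ i ∈ Finset.range (k+1), (p.coeff i) ^ 2 } with hSsetdef
  have hSdef : regChebyshev κ k (lam / ‖z‖^2) = sInf Sset := rfl
  have hSset_ne : Sset.Nonempty := ⟨_, 1, by simp, by simp, rfl⟩
  have hlbmem : ∀ w ∈ Sset, F / ‖z‖^2 ≤ w := by
    rintro w ⟨p, hdeg, heval, rfl⟩
    set ms := sSup ((fun x : ℝ => (p.eval x) ^ 2) '' Set.Icc (0:ℝ) (1 - κ)) with hms
    have hbdd : BddAbove ((fun x : ℝ => (p.eval x) ^ 2) '' Set.Icc (0:ℝ) (1 - κ)) :=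
      ((isCompact_Icc).image_of_continuousOn
        ((Polynomial.continuous p).pow 2).continuousOn).bddAbove
    have hmem : ∀ t ∈ Set.Icc (0:ℝ) (1-κ), (p.eval t)^2 ≤ ms :=
      fun t ht => le_csSup hbdd ⟨t, ht, rfl⟩
    have hms0 : 0 ≤ ms :=
      le_trans (sq_nonneg (p.eval 0)) (hmem 0 ⟨le_refl 0, by linarith⟩)
    set cp : EuclideanSpace ℝ (Fin (k+1)) := WithLp.toLp 2 (fun i => p.coeff ↑i) with hcp
    have hdeg' : p.natDegree < k+1 := Nat.lt_succ_of_le hdeg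
    have hsum1 : (∑ i, cp i) = 1 := by
      rw [hcp]
      simp only [PiLp.toLp_apply]
      rw [Fin.sum_univ_eq_sum_range (fun i => p.coeff i) (k+1)]
      have hev := Polynomial.eval_eq_sum_range' hdeg' (1:ℝ)
      simp only [one_pow, mul_one] at hev
      rw [← hev]; exact heval
    have hpcp : pc cp = p := by
      rw [hpcdef]
      conv_rhs => rw [Polynomial.as_sum_range' p (k+1) hdeg']
      exact Fin.sum_univ_eq_sum_range (fun i => Polynomial.monomial i (p.coeff i)) (k+1)
    have hnormcp : ‖cp‖^2 = ∑ i ∈ Finset.range (k+1), (p.coeff i)^2 := by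
      rw [RNAaux.norm_sq_eq]
      exact Fin.sum_univ_eq_sum_range (fun i => (p.coeff i)^2) (k+1)
    have hRcp : ‖Matrix.toEuclideanLin R cp‖ ≤ Real.sqrt ms * ‖z‖ := by
      have heq : Matrix.toEuclideanLin R cp =
          Matrix.toEuclideanLin (Polynomial.aeval G ((Polynomial.X - 1) * p)) z := by
        have haev : Polynomial.aeval G ((Polynomial.X - 1 : Polynomial ℝ)) = G - (1 : Matrix (Fin d) (Fin d) ℝ) := by
          simp
        have hsubapp : ∀ w : EuclideanSpace ℝ (Fin d),
            Matrix.toEuclideanLin (G - (1 : Matrix (Fin d) (Fin d) ℝ)) w =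
              Matrix.toEuclideanLin G w - w := by
          intro w
          rw [map_sub, LinearMap.sub_apply, RNAaux.toEuclideanLin_one]
        rw [hRGc cp, hMc_aeval cp, hpcp, _root_.map_mul, haev, RNAaux.toEuclideanLin_mul,
          hsubapp]
      rw [heq]
      apply RNAaux.spec_bound G hherm _ _ (Real.sqrt_nonneg ms) _ z
      intro j
      have hj := heig j
      rw [Polynomial.eval_mul, Polynomial.eval_sub, Polynomial.eval_X, Polynomial.eval_one,
        abs_mul]
      have h1' : |hherm.eigenvalues j - 1| ≤ 1 := by
        rw [abs_le]
        constructor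
        · linarith [hj.1]
        · linarith [hj.2, hκ0]
      have h2' : |p.eval (hherm.eigenvalues j)| ≤ Real.sqrt ms := by
        rw [← Real.sqrt_sq_eq_abs]
        exact Real.sqrt_le_sqrt (hmem _ hj)
      calc |hherm.eigenvalues j - 1| * |p.eval (hherm.eigenvalues j)|
          ≤ 1 * Real.sqrt ms := mul_le_mul h1' h2' (abs_nonneg _) one_pos.le
        _ = Real.sqrt ms := one_mul _
    have hkey := hmin1 cp hsum1
    have hsq : ‖Matrix.toEuclideanLin R cp‖^2 ≤ ms * ‖z‖^2 := by
      have h0 : (Real.sqrt ms * ‖z‖)^2 = ms * ‖z‖^2 := by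
        rw [mul_pow, Real.sq_sqrt hms0]
      nlinarith [norm_nonneg (Matrix.toEuclideanLin R cp), Real.sqrt_nonneg ms,
        norm_nonneg z, hRcp]
    rw [div_le_iff₀ (by positivity : (0:ℝ) < ‖z‖^2)]
    have hznz : ‖z‖^2 ≠ 0 := by positivity
    calc F ≤ ‖Matrix.toEuclideanLin R cp‖^2 + lam * ‖cp‖^2 := hkey
      _ ≤ ms * ‖z‖^2 + lam * ∑ i ∈ Finset.range (k+1), (p.coeff i)^2 := by
          rw [hnormcp]; linarith
      _ = (ms + (lam / ‖z‖^2) * ∑ i ∈ Finset.range (k+1), (p.coeff i)^2) * ‖z‖^2 := by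
          have h9 : (lam / ‖z‖^2) * (∑ i ∈ Finset.range (k+1), (p.coeff i)^2) * ‖z‖^2
              = lam * ∑ i ∈ Finset.range (k+1), (p.coeff i)^2 := by
            field_simp
          rw [add_mul, h9]
  have hFS' : F / ‖z‖^2 ≤ regChebyshev κ k (lam / ‖z‖^2) := by
    rw [hSdef]; exact le_csInf hSset_ne hlbmem
  have hF0 : 0 ≤ F := by rw [hFdef]; positivity
  have hS0 : 0 ≤ regChebyshev κ k (lam / ‖z‖^2) :=
    le_trans (by positivity) hFS'
  have hFS : F ≤ ‖z‖^2 * regChebyshev κ k (lam / ‖z‖^2) := by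
    rw [div_le_iff₀ (by positivity : (0:ℝ) < ‖z‖^2)] at hFS'
    linarith
  -- stability
  have hctfo := RNAaux.fo_of_min Rt lam hlam ct hct.1 hct.2
  set Δ : EuclideanSpace ℝ (Fin (k+1)) := ct - c1 with hΔdef
  have hinner_MM : ∀ (M : Matrix (Fin d) (Fin (k+1)) ℝ)
      (a b : EuclideanSpace ℝ (Fin (k+1))),
      ⟪Matrix.toEuclideanLin M a, Matrix.toEuclideanLin M b⟫ =
        ⟪a, Matrix.toEuclideanLin (Mᵀ * M) b⟫ := by
    intro M a b
    rw [RNAaux.toEuclideanLin_mul]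
    exact RNAaux.inner_mul_left M a (Matrix.toEuclideanLin M b)
  have hople_P : ∀ v, ‖Matrix.toEuclideanLin P v‖ ≤ opNorm P * ‖v‖ :=
    fun v => RNAaux.le_opNorm' P v
  have hople_Rt : ∀ v, ‖Matrix.toEuclideanLin Rt v‖ ≤ opNorm Rt * ‖v‖ :=
    fun v => RNAaux.le_opNorm' Rt v
  have hople_E : ∀ v, ‖Matrix.toEuclideanLin E v‖ ≤ opNorm E * ‖v‖ :=
    fun v => RNAaux.le_opNorm' E v
  have hop0_P : (0:ℝ) ≤ opNorm P := norm_nonneg _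
  have hop0_Rt : (0:ℝ) ≤ opNorm Rt := norm_nonneg _
  have hop0_E : (0:ℝ) ≤ opNorm E := norm_nonneg _
  have hstab : lam * ‖Δ‖ ≤ opNorm P * ‖c1‖ := by
    have hΔsum : (∑ i, Δ i) = 0 := by
      rw [hΔdef]
      simp only [PiLp.sub_apply, Finset.sum_sub_distrib, hct.1, hc1sum]
      ring
    have e1 := hctfo Δ hΔsum
    have e2 := hc1fo Δ hΔsum
    have hBt : ‖Matrix.toEuclideanLin Rt Δ‖^2 + lam * ‖Δ‖^2 = ⟪c1, Matrix.toEuclideanLin P Δ⟫ := by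
      have hsplit : Matrix.toEuclideanLin Rt Δ =
          Matrix.toEuclideanLin Rt ct - Matrix.toEuclideanLin Rt c1 := by
        rw [hΔdef, map_sub]
      have hinner : ⟪Matrix.toEuclideanLin Rt Δ, Matrix.toEuclideanLin Rt Δ⟫ +
          lam * ⟪Δ, Δ⟫ =
          -(⟪Matrix.toEuclideanLin Rt c1, Matrix.toEuclideanLin Rt Δ⟫ + lam * ⟪c1, Δ⟫) := by
        have hd : (⟪Δ, Δ⟫ : ℝ) = ⟪ct, Δ⟫ - ⟪c1, Δ⟫ := by
          rw [← inner_sub_left, ← hΔdef]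
        have hd2 : ⟪Matrix.toEuclideanLin Rt Δ, Matrix.toEuclideanLin Rt Δ⟫ =
            ⟪Matrix.toEuclideanLin Rt ct, Matrix.toEuclideanLin Rt Δ⟫ -
              ⟪Matrix.toEuclideanLin Rt c1, Matrix.toEuclideanLin Rt Δ⟫ := by
          rw [← inner_sub_left, ← hsplit]
        rw [hd2, hd]
        linarith [e1]
      have hPQ : ⟪Matrix.toEuclideanLin R c1, Matrix.toEuclideanLin R Δ⟫ -
          ⟪Matrix.toEuclideanLin Rt c1, Matrix.toEuclideanLin Rt Δ⟫ =
          ⟪c1, Matrix.toEuclideanLin P Δ⟫ := by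
        have hsubP : Matrix.toEuclideanLin (Rᵀ * R - Rtᵀ * Rt) Δ =
            Matrix.toEuclideanLin (Rᵀ * R) Δ - Matrix.toEuclideanLin (Rtᵀ * Rt) Δ := by
          rw [map_sub (Matrix.toEuclideanLin (𝕜 := ℝ) (m := Fin (k+1)) (n := Fin (k+1)))
            (Rᵀ * R) (Rtᵀ * Rt), LinearMap.sub_apply]
        rw [hinner_MM R, hinner_MM Rt, hP, hsubP, inner_sub_right]
      rw [← real_inner_self_eq_norm_sq, ← real_inner_self_eq_norm_sq]
      rw [hinner]
      linarith [e2, hPQ]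
    have hle : lam * ‖Δ‖^2 ≤ ‖c1‖ * (opNorm P * ‖Δ‖) := by
      have hip : ⟪c1, Matrix.toEuclideanLin P Δ⟫ ≤ ‖c1‖ * ‖Matrix.toEuclideanLin P Δ‖ :=
        real_inner_le_norm _ _
      have h1 : lam * ‖Δ‖^2 ≤ ⟪c1, Matrix.toEuclideanLin P Δ⟫ := by
        rw [← hBt]
        nlinarith [sq_nonneg ‖Matrix.toEuclideanLin Rt Δ‖]
      calc lam * ‖Δ‖^2 ≤ ‖c1‖ * ‖Matrix.toEuclideanLin P Δ‖ := le_trans h1 hip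
        _ ≤ ‖c1‖ * (opNorm P * ‖Δ‖) :=
            mul_le_mul_of_nonneg_left (hople_P Δ) (norm_nonneg c1)
    rcases eq_or_lt_of_le (norm_nonneg Δ) with hΔ0 | hΔpos
    · rw [← hΔ0, mul_zero]
      exact mul_nonneg hop0_P (norm_nonneg c1)
    · have := hle
      rw [show ‖Δ‖^2 = ‖Δ‖ * ‖Δ‖ from sq ‖Δ‖] at this
      nlinarith
  -- the three basic norm bounds
  have h1 : ‖Matrix.toEuclideanLin (Mc c1) z‖ ≤ κ⁻¹ * ‖Matrix.toEuclideanLin R c1‖ := by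
    have hlow1 := hlow (Matrix.toEuclideanLin (Mc c1) z)
    rw [← hRGc c1] at hlow1
    have h' : ‖Matrix.toEuclideanLin (Mc c1) z‖ ≤ ‖Matrix.toEuclideanLin R c1‖ / κ :=
      (le_div_iff₀' hκ0).mpr hlow1
    rwa [div_eq_inv_mul] at h'
  have h2 : ‖Matrix.toEuclideanLin (Mc Δ) z‖ ≤ (Real.sqrt (k+1) * ‖Δ‖) * ‖z‖ := by
    have habs : (∑ i : Fin (k+1), |Δ i|) ≤ Real.sqrt (k+1) * ‖Δ‖ := by
      have hsq : (∑ i : Fin (k+1), |Δ i|)^2 ≤ (k+1 : ℝ) * ∑ i : Fin (k+1), |Δ i|^2 := by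
        have := sq_sum_le_card_mul_sum_sq (s := (Finset.univ : Finset (Fin (k+1))))
          (f := fun i => |Δ i|)
        simpa using this
      have hnormΔ : (∑ i : Fin (k+1), |Δ i|^2) = ‖Δ‖^2 := by
        rw [RNAaux.norm_sq_eq]
        exact Finset.sum_congr rfl fun i _ => sq_abs (Δ i)
      rw [hnormΔ] at hsq
      have h0 : (0:ℝ) ≤ ∑ i : Fin (k+1), |Δ i| :=
        Finset.sum_nonneg fun i _ => abs_nonneg _
      have := Real.sqrt_le_sqrt hsq
      rw [Real.sqrt_sq h0, Real.sqrt_mul (by positivity) (‖Δ‖^2),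
        Real.sqrt_sq (norm_nonneg Δ)] at this
      exact this
    have hbnd0 : 0 ≤ Real.sqrt (k+1) * ‖Δ‖ := by positivity
    rw [hMc_aeval Δ]
    apply RNAaux.spec_bound G hherm _ _ hbnd0 _ z
    intro j
    have hj := heig j
    rw [hpc_eval Δ]
    calc |∑ i : Fin (k+1), Δ i * hherm.eigenvalues j ^ (i:ℕ)|
        ≤ ∑ i : Fin (k+1), |Δ i * hherm.eigenvalues j ^ (i:ℕ)| :=
          Finset.abs_sum_le_sum_abs _ _
      _ ≤ ∑ i : Fin (k+1), |Δ i| := by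
          apply Finset.sum_le_sum
          intro i _
          rw [abs_mul]
          have hpow : |hherm.eigenvalues j ^ (i:ℕ)| ≤ 1 := by
            rw [abs_pow]
            apply pow_le_one₀ (abs_nonneg _)
            rw [abs_le]
            constructor
            · linarith [hj.1]
            · linarith [hj.2, hκ0]
          calc |Δ i| * |hherm.eigenvalues j ^ (i:ℕ)| ≤ |Δ i| * 1 :=
                mul_le_mul_of_nonneg_left hpow (abs_nonneg _)
            _ = |Δ i| := mul_one _
      _ ≤ Real.sqrt (k+1) * ‖Δ‖ := habs
  have hctnorm : ‖ct‖ ≤ Real.sqrt ((1 + opNorm Rt^2/lam) / (k+1)) := by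
    set c' : EuclideanSpace ℝ (Fin (k+1)) := WithLp.toLp 2 (fun _ => ((k:ℝ)+1)⁻¹) with hc'
    have hk1 : (0:ℝ) < (k:ℝ)+1 := by positivity
    have hsumc' : (∑ i, c' i) = 1 := by
      rw [hc']
      simp only [PiLp.toLp_apply]
      rw [Finset.sum_const, Finset.card_univ, Fintype.card_fin, nsmul_eq_mul]
      push_cast
      field_simp
    have hnc' : ‖c'‖^2 = ((k:ℝ)+1)⁻¹ := by
      rw [RNAaux.norm_sq_eq, hc']
      simp only [PiLp.toLp_apply]
      rw [Finset.sum_const, Finset.card_univ, Fintype.card_fin, nsmul_eq_mul]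
      push_cast
      field_simp
    have hmint := hct.2 c' hsumc'
    have hRtc' : ‖Matrix.toEuclideanLin Rt c'‖^2 ≤ opNorm Rt^2 * ‖c'‖^2 := by
      have h5 := hople_Rt c'
      nlinarith [norm_nonneg (Matrix.toEuclideanLin Rt c'), norm_nonneg c', hop0_Rt]
    have hlamct : lam * ‖ct‖^2 ≤ (opNorm Rt^2 + lam) * ((k:ℝ)+1)⁻¹ := by
      have h4 : (0:ℝ) ≤ ‖Matrix.toEuclideanLin Rt ct‖^2 := sq_nonneg _
      calc lam * ‖ct‖^2 ≤ ‖Matrix.toEuclideanLin Rt ct‖^2 + lam * ‖ct‖^2 := by linarith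
        _ ≤ ‖Matrix.toEuclideanLin Rt c'‖^2 + lam * ‖c'‖^2 := hmint
        _ ≤ opNorm Rt^2 * ‖c'‖^2 + lam * ‖c'‖^2 := by linarith [hRtc']
        _ = (opNorm Rt^2 + lam) * ((k:ℝ)+1)⁻¹ := by rw [hnc']; ring
    have hctsq : ‖ct‖^2 ≤ (1 + opNorm Rt^2/lam) / ((k:ℝ)+1) := by
      rw [div_eq_mul_inv]
      have hexp : (1 + opNorm Rt^2/lam) * ((k:ℝ)+1)⁻¹ =
          ((opNorm Rt^2 + lam) * ((k:ℝ)+1)⁻¹) / lam := by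
        field_simp
        ring
      rw [hexp, le_div_iff₀ hlam]
      linarith [hlamct]
    have h6 := Real.sqrt_le_sqrt hctsq
    rw [Real.sqrt_sq (norm_nonneg ct)] at h6
    exact_mod_cast h6
  -- decomposition of the goal vector
  have hgoalvec : (∑ i : Fin (k+1), ct i • xt ↑i) - xs =
      Matrix.toEuclideanLin (Mc ct) z - Matrix.toEuclideanLin E ct := by
    rw [hMcz ct, hEc, ← Finset.sum_sub_distrib]
    have hterm : ∀ i : Fin (k+1), ct i • (x ↑i - xs) - ct i • (x ↑i - xt ↑i) =
        ct i • xt ↑i - ct i • xs := by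
      intro i
      rw [← smul_sub, ← smul_sub]
      congr 1
      abel
    rw [Finset.sum_congr rfl fun i _ => hterm i, Finset.sum_sub_distrib,
      ← Finset.sum_smul, hct.1, one_smul]
  have hXsplit : Matrix.toEuclideanLin (Mc ct) z =
      Matrix.toEuclideanLin (Mc c1) z + Matrix.toEuclideanLin (Mc Δ) z := by
    have hMadd : Mc ct = Mc c1 + Mc Δ := by
      rw [hMcdef]
      simp only [hΔdef, PiLp.sub_apply, sub_smul]
      rw [← Finset.sum_add_distrib]
      refine Finset.sum_congr rfl fun i _ => ?_
      abel
    rw [hMadd, map_add, LinearMap.add_apply]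
  -- final assembly
  set a := ‖Matrix.toEuclideanLin R c1‖ with hadef
  set b := Real.sqrt lam * ‖c1‖ with hbdef
  set q := Real.sqrt ((k:ℝ)+1) * ‖z‖ * opNorm P / (lam * Real.sqrt lam) with hqdef
  have hslam : (0:ℝ) < Real.sqrt lam := Real.sqrt_pos.mpr hlam
  have hq0 : 0 ≤ q := by
    rw [hqdef]
    apply div_nonneg
    · exact mul_nonneg (mul_nonneg (Real.sqrt_nonneg _) (norm_nonneg z)) hop0_P
    · positivity
  have hb0 : 0 ≤ b := by rw [hbdef]; positivity
  have ha0 : 0 ≤ a := norm_nonneg _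
  have hab : a^2 + b^2 = F := by
    rw [hadef, hbdef, hFdef, mul_pow, Real.sq_sqrt hlam.le]
  have hqb : q * b = Real.sqrt ((k:ℝ)+1) * (opNorm P * ‖c1‖ / lam) * ‖z‖ := by
    rw [hqdef, hbdef]
    field_simp
  have hX2 : ‖Matrix.toEuclideanLin (Mc Δ) z‖ ≤ q * b := by
    rw [hqb]
    have hΔle : ‖Δ‖ ≤ opNorm P * ‖c1‖ / lam := by
      rw [le_div_iff₀ hlam]
      calc ‖Δ‖ * lam = lam * ‖Δ‖ := mul_comm _ _
        _ ≤ opNorm P * ‖c1‖ := hstab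
    calc ‖Matrix.toEuclideanLin (Mc Δ) z‖ ≤ (Real.sqrt ((k:ℝ)+1) * ‖Δ‖) * ‖z‖ := h2
      _ ≤ Real.sqrt ((k:ℝ)+1) * (opNorm P * ‖c1‖ / lam) * ‖z‖ := by
          apply mul_le_mul_of_nonneg_right _ (norm_nonneg z)
          exact mul_le_mul_of_nonneg_left hΔle (Real.sqrt_nonneg _)
  have hX : ‖Matrix.toEuclideanLin (Mc ct) z‖ ≤ κ⁻¹ * a + q * b := by
    rw [hXsplit]
    calc ‖Matrix.toEuclideanLin (Mc c1) z + Matrix.toEuclideanLin (Mc Δ) z‖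
        ≤ ‖Matrix.toEuclideanLin (Mc c1) z‖ + ‖Matrix.toEuclideanLin (Mc Δ) z‖ :=
          norm_add_le _ _
      _ ≤ κ⁻¹ * a + q * b := add_le_add h1 hX2
  have hcs := RNAaux.cs2 κ⁻¹ q a b (inv_nonneg.mpr hκ0.le) hq0 ha0 hb0
  have hsqrtF : Real.sqrt (a^2 + b^2) ≤ ‖z‖ * Real.sqrt (regChebyshev κ k (lam / ‖z‖^2)) := by
    rw [hab]
    calc Real.sqrt F ≤ Real.sqrt (‖z‖^2 * regChebyshev κ k (lam / ‖z‖^2)) :=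
          Real.sqrt_le_sqrt hFS
      _ = ‖z‖ * Real.sqrt (regChebyshev κ k (lam / ‖z‖^2)) := by
          rw [Real.sqrt_mul (sq_nonneg _), Real.sqrt_sq (norm_nonneg z)]
  have hq2 : (κ⁻¹)^2 + q^2 = 1/κ^2 + ((k:ℝ)+1) * ‖z‖^2 * opNorm P^2 / lam^3 := by
    have h7 : q^2 = ((k:ℝ)+1) * ‖z‖^2 * opNorm P^2 / lam^3 := by
      rw [hqdef, div_pow, mul_pow, mul_pow, Real.sq_sqrt (by positivity : (0:ℝ) ≤ (k:ℝ)+1),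
        mul_pow, Real.sq_sqrt hlam.le]
      all_goals ring
    rw [h7, inv_pow, inv_eq_one_div]
  have hTermX : ‖Matrix.toEuclideanLin (Mc ct) z‖ ≤
      ‖z‖ * Real.sqrt (regChebyshev κ k (lam / ‖z‖^2)) *
        Real.sqrt (1/κ^2 + ((k:ℝ)+1) * ‖z‖^2 * opNorm P^2 / lam^3) := by
    calc ‖Matrix.toEuclideanLin (Mc ct) z‖ ≤ κ⁻¹ * a + q * b := hX
      _ ≤ Real.sqrt ((κ⁻¹)^2 + q^2) * Real.sqrt (a^2 + b^2) := hcs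
      _ ≤ Real.sqrt ((κ⁻¹)^2 + q^2) * (‖z‖ * Real.sqrt (regChebyshev κ k (lam / ‖z‖^2))) :=
          mul_le_mul_of_nonneg_left hsqrtF (Real.sqrt_nonneg _)
      _ = ‖z‖ * Real.sqrt (regChebyshev κ k (lam / ‖z‖^2)) *
            Real.sqrt (1/κ^2 + ((k:ℝ)+1) * ‖z‖^2 * opNorm P^2 / lam^3) := by
          rw [hq2]; ring
  have hTermE : ‖Matrix.toEuclideanLin E ct‖ ≤
      opNorm E / Real.sqrt ((k:ℝ)+1) * Real.sqrt (1 + opNorm Rt^2/lam) := by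
    calc ‖Matrix.toEuclideanLin E ct‖ ≤ opNorm E * ‖ct‖ := hople_E ct
      _ ≤ opNorm E * Real.sqrt ((1 + opNorm Rt^2/lam) / ((k:ℝ)+1)) :=
          mul_le_mul_of_nonneg_left (by exact_mod_cast hctnorm) hop0_E
      _ = opNorm E / Real.sqrt ((k:ℝ)+1) * Real.sqrt (1 + opNorm Rt^2/lam) := by
          rw [Real.sqrt_div (by positivity : (0:ℝ) ≤ 1 + opNorm Rt^2/lam)]
          ring
  calc ‖(∑ i : Fin (k+1), ct i • xt ↑i) - xs‖
      = ‖Matrix.toEuclideanLin (Mc ct) z - Matrix.toEuclideanLin E ct‖ := by rw [hgoalvec]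
    _ ≤ ‖Matrix.toEuclideanLin (Mc ct) z‖ + ‖Matrix.toEuclideanLin E ct‖ := norm_sub_le _ _
    _ ≤ ‖z‖ * Real.sqrt (regChebyshev κ k (lam / ‖z‖^2)) *
          Real.sqrt (1/κ^2 + ((k:ℝ)+1) * ‖z‖^2 * opNorm P^2 / lam^3) +
        opNorm E / Real.sqrt ((k:ℝ)+1) * Real.sqrt (1 + opNorm Rt^2/lam) :=
          add_le_add hTermX hTermE
end
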